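/- arXiv:2510.17992 — 8 statements merged into one kernel-verified Lean document; each statement's English description precedes it below -/
import Mathlib

section
/- Let 0 ≤ τ₁ < τ₂, let α, β ≥ 0 and θ ∈ [0,1). There exists a constant c > 0 depending only on α, β and θ with the following property: if f : [τ₁,τ₂] → ℝ is nonnegative and bounded and there exist constants A₁, A₂, B ≥ 0 such that f(s) ≤ θ·f(t) + A₁·(t−s)^(−α) + A₂·(t−s)^(−β) + B for all τ₁ ≤ s < t ≤ τ₂, then f(τ₁) ≤ c·[A₁·(τ₂−τ₁)^(−α) + A₂·(τ₂−τ₁)^(−β) + B]. -/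
set_option maxHeartbeats 1000000

private lemma geom_bound' {q : ℝ} (h0 : 0 ≤ q) (h1 : q < 1) (n : ℕ) :
    ∑ i ∈ Finset.range n, q ^ i ≤ (1 - q)⁻¹ := by
  rw [← tsum_geometric_of_lt_one h0 h1]
  exact Summable.sum_le_tsum _ (fun i _ => pow_nonneg h0 i) (summable_geometric_of_lt_one h0 h1)

private lemma pow_rpow_aux {lam : ℝ} (hlam : 0 < lam) (x : ℝ) (n : ℕ) :
    (lam ^ n) ^ (-x) = (lam ^ (-x)) ^ n := by
  rw [← Real.rpow_natCast lam n, ← Real.rpow_mul hlam.le, mul_comm,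
    Real.rpow_mul hlam.le, Real.rpow_natCast]

/-- Iteration lemma (Lemma 2.1, Giaquinta): given exponents `α, β ≥ 0` and an
absorption factor `θ ∈ [0,1)`, there is a constant `c = c(α, β, θ) > 0` such that
any nonnegative bounded function `f` on `[τ₁, τ₂]` satisfying
`f s ≤ θ * f t + A₁ * (t-s)^(-α) + A₂ * (t-s)^(-β) + B` for all `τ₁ ≤ s < t ≤ τ₂`
satisfies `f τ₁ ≤ c * (A₁ * (τ₂-τ₁)^(-α) + A₂ * (τ₂-τ₁)^(-β) + B)`. -/
theorem iteration_lemma (α β θ : ℝ) (hα : 0 ≤ α) (hβ : 0 ≤ β)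
    (hθ0 : 0 ≤ θ) (hθ1 : θ < 1) :
    ∃ c : ℝ, 0 < c ∧
      ∀ (τ₁ τ₂ : ℝ) (f : ℝ → ℝ) (A₁ A₂ B : ℝ),
        0 ≤ τ₁ → τ₁ < τ₂ →
        (∀ t ∈ Set.Icc τ₁ τ₂, 0 ≤ f t) →
        BddAbove (f '' Set.Icc τ₁ τ₂) →
        0 ≤ A₁ → 0 ≤ A₂ → 0 ≤ B →
        (∀ s t : ℝ, τ₁ ≤ s → s < t → t ≤ τ₂ →
          f s ≤ θ * f t + A₁ * (t - s) ^ (-α) + A₂ * (t - s) ^ (-β) + B) →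
        f τ₁ ≤ c * (A₁ * (τ₂ - τ₁) ^ (-α) + A₂ * (τ₂ - τ₁) ^ (-β) + B) := by
  -- choose lam
  set γ : ℝ := max α β with hγ
  set b : ℝ := (θ + 1) / 2 with hb
  have hb0 : 0 < b := by positivity
  have hb1 : b < 1 := by rw [hb]; linarith
  have hγ0 : 0 ≤ γ := le_trans hα (le_max_left _ _)
  set lam : ℝ := b ^ ((γ + 1)⁻¹) with hlamdef
  have hlam0 : 0 < lam := Real.rpow_pos_of_pos hb0 _
  have hlam1 : lam < 1 := Real.rpow_lt_one hb0.le hb1 (by positivity)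
  -- θ < lam ^ e for e ∈ {α, β}
  have key : ∀ e : ℝ, 0 ≤ e → e ≤ γ → θ < lam ^ e := by
    intro e he heγ
    have h1 : lam ^ e = b ^ ((γ + 1)⁻¹ * e) := by
      rw [hlamdef, ← Real.rpow_mul hb0.le]
    have h2 : (γ + 1)⁻¹ * e ≤ 1 := by
      rw [mul_comm, ← div_eq_mul_inv, div_le_one (by positivity : (0:ℝ) < γ + 1)]
      linarith
    have h3 : b ^ (1:ℝ) ≤ b ^ ((γ + 1)⁻¹ * e) :=
      Real.rpow_le_rpow_of_exponent_ge hb0 hb1.le h2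
    rw [Real.rpow_one] at h3
    calc θ < b := by rw [hb]; linarith
      _ ≤ b ^ ((γ + 1)⁻¹ * e) := h3
      _ = lam ^ e := h1.symm
  have hθα : θ < lam ^ α := key α hα (le_max_left _ _)
  have hθβ : θ < lam ^ β := key β hβ (le_max_right _ _)
  set μα : ℝ := lam ^ (-α) with hμα
  set μβ : ℝ := lam ^ (-β) with hμβ
  have hμα0 : 0 < μα := Real.rpow_pos_of_pos hlam0 _
  have hμβ0 : 0 < μβ := Real.rpow_pos_of_pos hlam0 _
  set qa : ℝ := θ * μα with hqa
  set qb : ℝ := θ * μβ with hqb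
  have hqa0 : 0 ≤ qa := mul_nonneg hθ0 hμα0.le
  have hqb0 : 0 ≤ qb := mul_nonneg hθ0 hμβ0.le
  have hqa1 : qa < 1 := by
    rw [hqa, hμα, Real.rpow_neg hlam0.le, ← div_eq_mul_inv,
      div_lt_one (Real.rpow_pos_of_pos hlam0 α)]
    exact hθα
  have hqb1 : qb < 1 := by
    rw [hqb, hμβ, Real.rpow_neg hlam0.le, ← div_eq_mul_inv,
      div_lt_one (Real.rpow_pos_of_pos hlam0 β)]
    exact hθβ
  have h1lam : 0 < 1 - lam := by linarith
  set c : ℝ := (1 - qa)⁻¹ * (1 - lam) ^ (-α) + (1 - qb)⁻¹ * (1 - lam) ^ (-β) + (1 - θ)⁻¹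
    with hc
  have hCa : 0 < (1 - qa)⁻¹ := by rw [inv_pos]; linarith
  have hCb : 0 < (1 - qb)⁻¹ := by rw [inv_pos]; linarith
  have hC0 : 0 < (1 - θ)⁻¹ := by rw [inv_pos]; linarith
  have hla : 0 < (1 - lam) ^ (-α) := Real.rpow_pos_of_pos h1lam _
  have hlb : 0 < (1 - lam) ^ (-β) := Real.rpow_pos_of_pos h1lam _
  refine ⟨c, by positivity, ?_⟩
  intro τ₁ τ₂ f A₁ A₂ B hτ₁ hττ hf0 hbdd hA₁ hA₂ hB hyp
  set d : ℝ := τ₂ - τ₁ with hd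
  have hd0 : 0 < d := by simp [hd]; linarith
  set t : ℕ → ℝ := fun n => τ₂ - lam ^ n * d with ht
  have ht0 : t 0 = τ₁ := by simp [ht, hd]
  have htmem : ∀ n, t n ∈ Set.Icc τ₁ τ₂ := by
    intro n
    constructor
    · have h1 : lam ^ n ≤ 1 := pow_le_one₀ hlam0.le hlam1.le
      have : lam ^ n * d ≤ d := mul_le_of_le_one_left hd0.le h1
      simp only [ht]; linarith [this]
    · have : 0 < lam ^ n * d := by positivity
      simp only [ht]; linarith
  have htlt : ∀ n, t n < t (n + 1) := by
    intro n
    have : t (n+1) - t n = lam ^ n * ((1 - lam) * d) := by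
      simp only [ht, pow_succ]; ring
    have h2 : 0 < lam ^ n * ((1 - lam) * d) := by positivity
    linarith [this ▸ h2]
  set Ka : ℝ := A₁ * ((1 - lam) * d) ^ (-α) with hKa
  set Kb : ℝ := A₂ * ((1 - lam) * d) ^ (-β) with hKb
  have hKa0 : 0 ≤ Ka := by positivity
  have hKb0 : 0 ≤ Kb := by positivity
  -- main induction
  have main : ∀ n : ℕ, f τ₁ ≤ θ ^ n * f (t n)
      + (∑ i ∈ Finset.range n, qa ^ i) * Ka
      + (∑ i ∈ Finset.range n, qb ^ i) * Kb
      + (∑ i ∈ Finset.range n, θ ^ i) * B := by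
    intro n
    induction n with
    | zero => simp [ht0]
    | succ n ih =>
      have hgap : t (n+1) - t n = lam ^ n * ((1 - lam) * d) := by
        simp only [ht, pow_succ]; ring
      have hstep := hyp (t n) (t (n+1)) (htmem n).1 (htlt n) (htmem (n+1)).2
      rw [hgap] at hstep
      have hga : (lam ^ n * ((1 - lam) * d)) ^ (-α)
          = μα ^ n * ((1 - lam) * d) ^ (-α) := by
        rw [Real.mul_rpow (by positivity) (by positivity), hμα, pow_rpow_aux hlam0]
      have hgb : (lam ^ n * ((1 - lam) * d)) ^ (-β)
          = μβ ^ n * ((1 - lam) * d) ^ (-β) := by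
        rw [Real.mul_rpow (by positivity) (by positivity), hμβ, pow_rpow_aux hlam0]
      rw [hga, hgb] at hstep
      have hθn : (0:ℝ) ≤ θ ^ n := pow_nonneg hθ0 n
      have hmul := mul_le_mul_of_nonneg_left hstep hθn
      have e1 : θ ^ n * (θ * f (t (n+1)) + A₁ * (μα ^ n * ((1 - lam) * d) ^ (-α))
            + A₂ * (μβ ^ n * ((1 - lam) * d) ^ (-β)) + B)
          = θ ^ (n+1) * f (t (n+1)) + qa ^ n * Ka + qb ^ n * Kb + θ ^ n * B := by
        simp only [hqa, hqb, hKa, hKb, mul_pow, pow_succ]; ring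
      rw [e1] at hmul
      rw [Finset.sum_range_succ, Finset.sum_range_succ, Finset.sum_range_succ]
      calc f τ₁ ≤ θ ^ n * f (t n)
            + (∑ i ∈ Finset.range n, qa ^ i) * Ka
            + (∑ i ∈ Finset.range n, qb ^ i) * Kb
            + (∑ i ∈ Finset.range n, θ ^ i) * B := ih
        _ ≤ _ := by linarith [hmul]
  -- bound with sup
  set M : ℝ := sSup (f '' Set.Icc τ₁ τ₂) with hM
  have hfM : ∀ n, f (t n) ≤ M := fun n =>
    le_csSup hbdd (Set.mem_image_of_mem f (htmem n))
  have bound : ∀ n : ℕ, f τ₁ ≤ θ ^ n * M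
      + ((1 - qa)⁻¹ * Ka + (1 - qb)⁻¹ * Kb + (1 - θ)⁻¹ * B) := by
    intro n
    have h1 : θ ^ n * f (t n) ≤ θ ^ n * M :=
      mul_le_mul_of_nonneg_left (hfM n) (pow_nonneg hθ0 n)
    have h2 : (∑ i ∈ Finset.range n, qa ^ i) * Ka ≤ (1 - qa)⁻¹ * Ka :=
      mul_le_mul_of_nonneg_right (geom_bound' hqa0 hqa1 n) hKa0
    have h3 : (∑ i ∈ Finset.range n, qb ^ i) * Kb ≤ (1 - qb)⁻¹ * Kb :=
      mul_le_mul_of_nonneg_right (geom_bound' hqb0 hqb1 n) hKb0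
    have h4 : (∑ i ∈ Finset.range n, θ ^ i) * B ≤ (1 - θ)⁻¹ * B :=
      mul_le_mul_of_nonneg_right (geom_bound' hθ0 hθ1 n) hB
    linarith [main n]
  -- pass to the limit
  have hlim : Filter.Tendsto
      (fun n : ℕ => θ ^ n * M + ((1 - qa)⁻¹ * Ka + (1 - qb)⁻¹ * Kb + (1 - θ)⁻¹ * B))
      Filter.atTop (nhds ((1 - qa)⁻¹ * Ka + (1 - qb)⁻¹ * Kb + (1 - θ)⁻¹ * B)) := by
    have h0 : Filter.Tendsto (fun n : ℕ => θ ^ n * M) Filter.atTop (nhds 0) := by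
      simpa using (tendsto_pow_atTop_nhds_zero_of_lt_one hθ0 hθ1).mul_const M
    simpa using h0.add_const ((1 - qa)⁻¹ * Ka + (1 - qb)⁻¹ * Kb + (1 - θ)⁻¹ * B)
  have hfS : f τ₁ ≤ (1 - qa)⁻¹ * Ka + (1 - qb)⁻¹ * Kb + (1 - θ)⁻¹ * B :=
    ge_of_tendsto' hlim bound
  -- final arithmetic
  have hKa' : Ka = (1 - lam) ^ (-α) * (A₁ * d ^ (-α)) := by
    rw [hKa, Real.mul_rpow h1lam.le hd0.le]; ring
  have hKb' : Kb = (1 - lam) ^ (-β) * (A₂ * d ^ (-β)) := by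
    rw [hKb, Real.mul_rpow h1lam.le hd0.le]; ring
  have hX : 0 ≤ A₁ * d ^ (-α) := by positivity
  have hY : 0 ≤ A₂ * d ^ (-β) := by positivity
  have hfinal : (1 - qa)⁻¹ * Ka + (1 - qb)⁻¹ * Kb + (1 - θ)⁻¹ * B
      ≤ c * (A₁ * d ^ (-α) + A₂ * d ^ (-β) + B) := by
    have e1 : (1 - qa)⁻¹ * Ka = ((1 - qa)⁻¹ * (1 - lam) ^ (-α)) * (A₁ * d ^ (-α)) := by
      rw [hKa']; ring
    have e2 : (1 - qb)⁻¹ * Kb = ((1 - qb)⁻¹ * (1 - lam) ^ (-β)) * (A₂ * d ^ (-β)) := by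
      rw [hKb']; ring
    have p1 : 0 < (1 - qa)⁻¹ * (1 - lam) ^ (-α) := mul_pos hCa hla
    have p2 : 0 < (1 - qb)⁻¹ * (1 - lam) ^ (-β) := mul_pos hCb hlb
    have c1 : (1 - qa)⁻¹ * (1 - lam) ^ (-α) ≤ c := by rw [hc]; linarith
    have c2 : (1 - qb)⁻¹ * (1 - lam) ^ (-β) ≤ c := by rw [hc]; linarith
    have c3 : (1 - θ)⁻¹ ≤ c := by rw [hc]; linarith
    have t1 : ((1 - qa)⁻¹ * (1 - lam) ^ (-α)) * (A₁ * d ^ (-α)) ≤ c * (A₁ * d ^ (-α)) :=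
      mul_le_mul_of_nonneg_right c1 hX
    have t2 : ((1 - qb)⁻¹ * (1 - lam) ^ (-β)) * (A₂ * d ^ (-β)) ≤ c * (A₂ * d ^ (-β)) :=
      mul_le_mul_of_nonneg_right c2 hY
    have t3 : (1 - θ)⁻¹ * B ≤ c * B := mul_le_mul_of_nonneg_right c3 hB
    rw [e1, e2]
    linarith
  exact hfS.trans hfinal
end

section
/- Let (T, μ_t) and (X, μ_x) be measure spaces and μ = μ_t ⊗ μ_x on T × X. For each σ ∈ (0,1] let U_σ = U_σ^t × U_σ^x where U_σ^t ⊆ T and U_σ^x ⊆ X are measurable sets such that U_{σ'}^t ⊆ U_σ^t and U_{σ'}^x ⊆ U_σ^x whenever σ' ≤ σ. Let κ > 1, β₁, β₂ ≥ 1, p̄ ≥ 1, C ≥ 1, δ ∈ (0,1) and a > 0. Suppose f is a μ-measurable function on U₁ such that ‖f‖_{L_{β₁γκ, β₂γκ}(U_{σ'})} ≤ (C·(1+γ)^a/(σ−σ')^a)^{1/γ} · ‖f‖_{L_{β₁γ, β₂γ}(U_σ)} for every δ < σ' < σ ≤ 1 and every γ > 0. Then there exists a constant M = M(a, κ, p̄)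 such that for all p ∈ (0, p̄]: ess sup_{U_δ} |f| ≤ (M·C^{κ/(κ−1)}/(1−δ)^{γ₀})^{1/p} · ‖f‖_{L_{β₁p, β₂p}(U₁)}, where γ₀ = aκ/(κ−1). -/
open MeasureTheory ENNReal

/-- Mixed `L_{p,q}` norm (finite exponents `p, q`) of a function on a product
of a time set `At` and a space set `Ax`:
`( ∫_{At} ( ∫_{Ax} |f|^q dμx )^{p/q} dμt )^{1/p}`, valued in `ℝ≥0∞`. -/
noncomputable def mixedNorm {T X : Type*} [MeasurableSpace T] [MeasurableSpace X]
    (μt : Measure T) (μx : Measure X) (At : Set T) (Ax : Set X)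
    (p q : ℝ) (f : T × X → ℝ) : ℝ≥0∞ :=
  (∫⁻ t in At, (∫⁻ x in Ax, ENNReal.ofReal (|f (t, x)| ^ q) ∂μx) ^ (p / q) ∂μt) ^ (1 / p)

open Filter Topology

/-- `σₙ = δ + (1-δ)/2ⁿ`, the standard shrinking sequence for Moser iteration. -/
noncomputable def moserSigma (δ : ℝ) (n : ℕ) : ℝ := δ + (1 - δ) * (1/2 : ℝ) ^ n

lemma moser_prod_rpow_sum {x : ℝ} (hx : 0 < x) (f : ℕ → ℝ) (n : ℕ) :
    ∏ k ∈ Finset.range n, x ^ (f k) = x ^ (∑ k ∈ Finset.range n, f k) := by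
  induction n with
  | zero => simp
  | succ n ih => rw [Finset.prod_range_succ, Finset.sum_range_succ, ih, ← Real.rpow_add hx]

lemma moser_prod_zero {T X : Type} [MeasurableSpace T] [MeasurableSpace X]
    {μt : Measure T} (μx : Measure X)
    (hM : ¬ AEMeasurable (fun t => μx.map (Prod.mk t)) μt) :
    μt.prod μx = 0 := by
  rw [Measure.prod, Measure.bind, Measure.map_of_not_aemeasurable hM, Measure.join_zero]

lemma moser_prod_apply {T X : Type} [MeasurableSpace T] [MeasurableSpace X]
    {μt : Measure T} {μx : Measure X}
    (hM : AEMeasurable (fun t => μx.map (Prod.mk t)) μt)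
    {s : Set (T × X)} (hs : MeasurableSet s) :
    (μt.prod μx) s = ∫⁻ t, μx (Prod.mk t ⁻¹' s) ∂μt := by
  rw [Measure.prod, Measure.bind, Measure.map_congr hM.ae_eq_mk, ← Measure.bind,
    Measure.bind_apply hs hM.measurable_mk.aemeasurable]
  refine Eq.trans (lintegral_congr_ae (g := fun t => μx.map (Prod.mk t) s) ?_)
    (lintegral_congr fun t => ?_)
  · filter_upwards [hM.ae_eq_mk] with t ht using (congrArg (fun m => m s) ht).symm
  · exact Measure.map_apply measurable_prodMk_left hs

lemma moser_mixedNorm_mono {T X : Type*} [MeasurableSpace T] [MeasurableSpace X]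
    (μt : Measure T) (μx : Measure X) {At At' : Set T} {Ax Ax' : Set X}
    (hAt : At ⊆ At') (hAx : Ax ⊆ Ax') {P Q : ℝ} (hP : 0 ≤ 1/P) (hPQ : 0 ≤ P/Q)
    (f : T × X → ℝ) :
    mixedNorm μt μx At Ax P Q f ≤ mixedNorm μt μx At' Ax' P Q f := by
  refine ENNReal.rpow_le_rpow ?_ hP
  calc ∫⁻ t in At, (∫⁻ x in Ax, ENNReal.ofReal (|f (t, x)| ^ Q) ∂μx) ^ (P/Q) ∂μt
      ≤ ∫⁻ t in At, (∫⁻ x in Ax', ENNReal.ofReal (|f (t, x)| ^ Q) ∂μx) ^ (P/Q) ∂μt :=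
        lintegral_mono fun t => ENNReal.rpow_le_rpow (lintegral_mono_set hAx) hPQ
    _ ≤ ∫⁻ t in At', (∫⁻ x in Ax', ENNReal.ofReal (|f (t, x)| ^ Q) ∂μx) ^ (P/Q) ∂μt :=
        lintegral_mono_set hAt

set_option maxHeartbeats 1000000 in
/-- Abstract Moser iteration lemma (Lemma 2.2): if the mixed norms of `f` on a
nested family of product sets `U_σ = U_σ^t × U_σ^x` satisfy the reverse Hölder
type iteration inequality with exponent gain `κ > 1`, then the essential
supremum of `|f|` on `U_δ` is controlled by any `L_{β₁ p, β₂ p}` norm on `U₁`,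
with a constant `M = M(a, κ, p̄)`. -/
theorem moser_iteration (a κ pbar : ℝ) (ha : 0 < a) (hκ : 1 < κ) (hpbar : 1 ≤ pbar) :
    ∃ M : ℝ, 0 < M ∧
      ∀ (T X : Type) [MeasurableSpace T] [MeasurableSpace X]
        (μt : Measure T) (μx : Measure X)
        (Ut : ℝ → Set T) (Ux : ℝ → Set X)
        (β₁ β₂ C δ : ℝ) (f : T × X → ℝ),
        (∀ σ ∈ Set.Ioc (0:ℝ) 1, MeasurableSet (Ut σ)) →
        (∀ σ ∈ Set.Ioc (0:ℝ) 1, MeasurableSet (Ux σ)) →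
        (∀ σ' σ : ℝ, 0 < σ' → σ' ≤ σ → σ ≤ 1 → Ut σ' ⊆ Ut σ) →
        (∀ σ' σ : ℝ, 0 < σ' → σ' ≤ σ → σ ≤ 1 → Ux σ' ⊆ Ux σ) →
        1 ≤ β₁ → 1 ≤ β₂ → 1 ≤ C → δ ∈ Set.Ioo (0:ℝ) 1 →
        Measurable f →
        (∀ σ' σ γ : ℝ, δ < σ' → σ' < σ → σ ≤ 1 → 0 < γ →
          mixedNorm μt μx (Ut σ') (Ux σ') (β₁ * γ * κ) (β₂ * γ * κ) f ≤
            ENNReal.ofReal ((C * (1 + γ) ^ a / (σ - σ') ^ a) ^ (1 / γ)) *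
              mixedNorm μt μx (Ut σ) (Ux σ) (β₁ * γ) (β₂ * γ) f) →
        ∀ p : ℝ, 0 < p → p ≤ pbar →
          essSup (fun z => ENNReal.ofReal |f z|)
              ((μt.prod μx).restrict (Ut δ ×ˢ Ux δ)) ≤
            ENNReal.ofReal
                ((M * C ^ (κ / (κ - 1)) / (1 - δ) ^ (a * κ / (κ - 1))) ^ (1 / p)) *
              mixedNorm μt μx (Ut 1) (Ux 1) (β₁ * p) (β₂ * p) f := by
  have hκ0 : (0:ℝ) < κ := by linarith
  have hκ1 : (0:ℝ) < κ - 1 := by linarith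
  refine ⟨(2*(1+pbar)) ^ (a * (κ/(κ-1))) * (2*κ) ^ (a * (κ/(κ-1))^2), by positivity, ?_⟩
  intro T X _ _ μt μx Ut Ux β₁ β₂ C δ f hUtm hUxm hUtmono hUxmono hβ₁ hβ₂ hC hδ hf hiter
    p hp hppbar
  obtain ⟨hδ0, hδ1⟩ := hδ
  have h1δ : (0:ℝ) < 1 - δ := by linarith
  have hβ₁0 : (0:ℝ) < β₁ := by linarith
  have hβ₂0 : (0:ℝ) < β₂ := by linarith
  have hC0 : (0:ℝ) < C := by linarith
  have hρ : (0:ℝ) < β₁ / β₂ := by positivity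
  have hUtδm : MeasurableSet (Ut δ) := hUtm δ ⟨hδ0, hδ1.le⟩
  have hUxδm : MeasurableSet (Ux δ) := hUxm δ ⟨hδ0, hδ1.le⟩
  -- basic facts on σₙ
  have hσ_le_one : ∀ n : ℕ, moserSigma δ n ≤ 1 := by
    intro n
    have h2 : ((1:ℝ)/2) ^ n ≤ 1 := pow_le_one₀ (by norm_num) (by norm_num)
    have : (1 - δ) * ((1:ℝ)/2) ^ n ≤ (1 - δ) * 1 := by nlinarith
    simp only [moserSigma]; linarith
  have hσ_gt : ∀ n : ℕ, δ < moserSigma δ n := by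
    intro n
    have : (0:ℝ) < (1 - δ) * ((1:ℝ)/2) ^ n := by positivity
    simp only [moserSigma]; linarith
  have hσ_lt : ∀ n : ℕ, moserSigma δ (n+1) < moserSigma δ n := by
    intro n
    have hp2 : ((1:ℝ)/2) ^ (n+1) < ((1:ℝ)/2) ^ n :=
      pow_lt_pow_right_of_lt_one₀ (by norm_num) (by norm_num) (Nat.lt_succ_self n)
    have := mul_lt_mul_of_pos_left hp2 h1δ
    simp only [moserSigma]; linarith
  have hσ0 : moserSigma δ 0 = 1 := by simp [moserSigma]
  -- the constant K and the product bound
  set θ : ℝ := κ / (κ - 1) with hθdef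
  have hθ0 : 0 < θ := by positivity
  set Mc : ℝ := (2*(1+pbar)) ^ (a * θ) * (2*κ) ^ (a * θ^2) with hMcdef
  -- iteration bound
  have key : ∀ n : ℕ,
      mixedNorm μt μx (Ut (moserSigma δ n)) (Ux (moserSigma δ n))
          (β₁ * (p * κ ^ n)) (β₂ * (p * κ ^ n)) f ≤
        ENNReal.ofReal (∏ k ∈ Finset.range n,
            (C * (1 + p * κ ^ k) ^ a / ((1 - δ) * (1/2 : ℝ) ^ (k+1)) ^ a) ^ (1 / (p * κ ^ k))) *
          mixedNorm μt μx (Ut 1) (Ux 1) (β₁ * p) (β₂ * p) f := by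
    intro n
    induction n with
    | zero =>
      simp only [Finset.range_zero, Finset.prod_empty, ENNReal.ofReal_one, one_mul,
        pow_zero, mul_one, hσ0]
      exact le_rfl
    | succ n ih =>
      have hγ : (0:ℝ) < p * κ ^ n := by positivity
      have hstep := hiter (moserSigma δ (n+1)) (moserSigma δ n) (p * κ ^ n)
        (hσ_gt (n+1)) (hσ_lt n) (hσ_le_one n) hγ
      have e1 : β₁ * (p * κ ^ n) * κ = β₁ * (p * κ ^ (n+1)) := by ring
      have e2 : β₂ * (p * κ ^ n) * κ = β₂ * (p * κ ^ (n+1)) := by ring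
      have e3 : moserSigma δ n - moserSigma δ (n+1) = (1 - δ) * (1/2 : ℝ) ^ (n+1) := by
        simp only [moserSigma]; ring
      rw [e1, e2, e3] at hstep
      have hcn : (0:ℝ) ≤
          (C * (1 + p * κ ^ n) ^ a / ((1 - δ) * (1/2 : ℝ) ^ (n+1)) ^ a) ^ (1 / (p * κ ^ n)) := by
        positivity
      calc mixedNorm μt μx (Ut (moserSigma δ (n+1))) (Ux (moserSigma δ (n+1)))
            (β₁ * (p * κ ^ (n+1))) (β₂ * (p * κ ^ (n+1))) f
          ≤ ENNReal.ofReal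
              ((C * (1 + p * κ ^ n) ^ a / ((1 - δ) * (1/2 : ℝ) ^ (n+1)) ^ a) ^ (1 / (p * κ ^ n))) *
            mixedNorm μt μx (Ut (moserSigma δ n)) (Ux (moserSigma δ n))
              (β₁ * (p * κ ^ n)) (β₂ * (p * κ ^ n)) f := hstep
        _ ≤ ENNReal.ofReal
              ((C * (1 + p * κ ^ n) ^ a / ((1 - δ) * (1/2 : ℝ) ^ (n+1)) ^ a) ^ (1 / (p * κ ^ n))) *
            (ENNReal.ofReal (∏ k ∈ Finset.range n,
                (C * (1 + p * κ ^ k) ^ a / ((1 - δ) * (1/2 : ℝ) ^ (k+1)) ^ a) ^ (1 / (p * κ ^ k))) *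
              mixedNorm μt μx (Ut 1) (Ux 1) (β₁ * p) (β₂ * p) f) := mul_le_mul_right ih _
        _ = ENNReal.ofReal (∏ k ∈ Finset.range (n+1),
              (C * (1 + p * κ ^ k) ^ a / ((1 - δ) * (1/2 : ℝ) ^ (k+1)) ^ a) ^ (1 / (p * κ ^ k))) *
            mixedNorm μt μx (Ut 1) (Ux 1) (β₁ * p) (β₂ * p) f := by
            rw [← mul_assoc, ← ENNReal.ofReal_mul hcn, Finset.prod_range_succ, mul_comm _
              ((C * (1 + p * κ ^ n) ^ a / ((1 - δ) * (1/2 : ℝ) ^ (n+1)) ^ a) ^ (1 / (p * κ ^ n)))]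
  -- product bound
  have prodbound : ∀ n : ℕ,
      (∏ k ∈ Finset.range n,
          (C * (1 + p * κ ^ k) ^ a / ((1 - δ) * (1/2 : ℝ) ^ (k+1)) ^ a) ^ (1 / (p * κ ^ k))) ≤
        (Mc * C ^ θ / (1 - δ) ^ (a * θ)) ^ (1 / p) := by
    intro n
    set D : ℝ := C * (1 + pbar) ^ a * 2 ^ a / (1 - δ) ^ a with hDdef
    set E : ℝ := (2 * κ) ^ a with hEdef
    have hD0 : 0 < D := by rw [hDdef]; positivity
    have hE0 : 0 < E := by rw [hEdef]; positivity
    have hD1 : 1 ≤ D := by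
      rw [hDdef, le_div_iff₀ (by positivity)]
      have h1 : (1 - δ) ^ a ≤ 1 := Real.rpow_le_one h1δ.le (by linarith) ha.le
      have h2 : (1:ℝ) ≤ (1 + pbar) ^ a := Real.one_le_rpow (by linarith) ha.le
      have h3 : (1:ℝ) ≤ (2:ℝ) ^ a := Real.one_le_rpow (by norm_num) ha.le
      nlinarith [mul_le_mul hC (mul_le_mul h2 h3 (by norm_num) (by positivity))
        (by norm_num) (by positivity)]
    have hE1 : 1 ≤ E := Real.one_le_rpow (by linarith) ha.le
    -- termwise bound
    have hterm : ∀ k : ℕ,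
        (C * (1 + p * κ ^ k) ^ a / ((1 - δ) * (1/2 : ℝ) ^ (k+1)) ^ a) ^ (1 / (p * κ ^ k)) ≤
          D ^ (1 / (p * κ ^ k)) * E ^ ((k:ℝ) * (1 / (p * κ ^ k))) := by
      intro k
      have hκk : (0:ℝ) < κ ^ k := by positivity
      have hκk1 : (1:ℝ) ≤ κ ^ k := one_le_pow₀ hκ.le
      have hγ : (0:ℝ) < p * κ ^ k := by positivity
      have hbase : C * (1 + p * κ ^ k) ^ a / ((1 - δ) * (1/2 : ℝ) ^ (k+1)) ^ a ≤ D * E ^ k := by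
        have hDE : D * E ^ k = C * ((1 + pbar) * 2 * (2 * κ) ^ k / (1 - δ)) ^ a := by
          rw [hDdef, hEdef, ← Real.rpow_natCast ((2*κ) ^ a) k, ← Real.rpow_mul (by positivity),
            mul_comm a (k:ℝ), Real.rpow_mul (by positivity), Real.rpow_natCast,
            Real.div_rpow (by positivity) (by positivity),
            Real.mul_rpow (by positivity) (by positivity),
            Real.mul_rpow (by positivity) (by positivity)]
          ring
        rw [hDE, mul_div_assoc, ← Real.div_rpow (by positivity) (by positivity)]
        have harg : (1 + p * κ ^ k) / ((1 - δ) * (1/2 : ℝ) ^ (k+1)) ≤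
            (1 + pbar) * 2 * (2 * κ) ^ k / (1 - δ) := by
          have hden : (1 - δ) * (1/2 : ℝ) ^ (k+1) = (1 - δ) / (2 * 2 ^ k) := by
            rw [div_pow, one_pow, pow_succ]; ring
          rw [hden, div_div_eq_mul_div, div_le_div_iff₀ (by positivity) h1δ, mul_pow]
          have h2k : (0:ℝ) < (2:ℝ) ^ k := by positivity
          have hpk : p * κ ^ k ≤ pbar * κ ^ k :=
            mul_le_mul_of_nonneg_right hppbar hκk.le
          have hnum : (1 + p * κ ^ k) * (2 * 2 ^ k) ≤ (1 + pbar) * 2 * (2 ^ k * κ ^ k) := by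
            nlinarith [mul_le_mul_of_nonneg_right hpk h2k.le,
              mul_le_mul_of_nonneg_left hκk1 h2k.le]
          exact mul_le_mul_of_nonneg_right hnum h1δ.le
        exact mul_le_mul_of_nonneg_left
          (Real.rpow_le_rpow (by positivity) harg ha.le) hC0.le
      calc (C * (1 + p * κ ^ k) ^ a / ((1 - δ) * (1/2 : ℝ) ^ (k+1)) ^ a) ^ (1 / (p * κ ^ k))
          ≤ (D * E ^ k) ^ (1 / (p * κ ^ k)) :=
            Real.rpow_le_rpow (by positivity) hbase (by positivity)
        _ = D ^ (1 / (p * κ ^ k)) * E ^ ((k:ℝ) * (1 / (p * κ ^ k))) := by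
            rw [Real.mul_rpow hD0.le (by positivity), ← Real.rpow_natCast E k,
              ← Real.rpow_mul hE0.le]
    -- sum bounds
    have hr0 : (0:ℝ) ≤ 1/κ := by positivity
    have hr1 : (1:ℝ)/κ < 1 := by rw [div_lt_one hκ0]; exact hκ
    have hinv : (1 - 1/κ)⁻¹ = θ := by
      rw [hθdef]; rw [one_sub_div hκ0.ne', inv_div]
    have hsum1 : ∑ k ∈ Finset.range n, 1 / (p * κ ^ k) ≤ θ * (1/p) := by
      have he : ∀ k : ℕ, 1 / (p * κ ^ k) = (1/p) * (1/κ) ^ k := by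
        intro k; rw [div_pow, one_pow]; field_simp
      rw [Finset.sum_congr rfl fun k _ => he k, ← Finset.mul_sum]
      have hle : ∑ k ∈ Finset.range n, ((1:ℝ)/κ) ^ k ≤ (1 - 1/κ)⁻¹ := by
        have hts := tsum_geometric_of_lt_one hr0 hr1
        calc ∑ k ∈ Finset.range n, ((1:ℝ)/κ) ^ k
            ≤ ∑' k : ℕ, ((1:ℝ)/κ) ^ k :=
              (summable_geometric_of_lt_one hr0 hr1).sum_le_tsum _ (fun i _ => by positivity)
          _ = (1 - 1/κ)⁻¹ := hts
      rw [hinv] at hle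
      calc (1/p) * ∑ k ∈ Finset.range n, ((1:ℝ)/κ) ^ k ≤ (1/p) * θ := by
            exact mul_le_mul_of_nonneg_left hle (by positivity)
        _ = θ * (1/p) := by ring
    have hsum2 : ∑ k ∈ Finset.range n, (k:ℝ) * (1 / (p * κ ^ k)) ≤ θ^2 * (1/p) := by
      have he : ∀ k : ℕ, (k:ℝ) * (1 / (p * κ ^ k)) = (1/p) * ((k:ℝ) * (1/κ) ^ k) := by
        intro k; rw [div_pow, one_pow]; field_simp
      rw [Finset.sum_congr rfl fun k _ => he k, ← Finset.mul_sum]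
      have hnorm : ‖(1:ℝ)/κ‖ < 1 := by rw [Real.norm_eq_abs, abs_of_nonneg hr0]; exact hr1
      have hle : ∑ k ∈ Finset.range n, (k:ℝ) * (1/κ) ^ k ≤ (1/κ) / (1 - 1/κ)^2 := by
        calc ∑ k ∈ Finset.range n, (k:ℝ) * (1/κ) ^ k
            ≤ ∑' k : ℕ, (k:ℝ) * (1/κ) ^ k :=
              (hasSum_coe_mul_geometric_of_norm_lt_one hnorm).summable.sum_le_tsum _ (fun i _ => by positivity)
          _ = (1/κ) / (1 - 1/κ)^2 := tsum_coe_mul_geometric_of_norm_lt_one hnorm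
      have hle2 : (1/κ) / (1 - 1/κ)^2 ≤ θ^2 := by
        have h11 : (0:ℝ) < 1 - 1/κ := by linarith
        calc (1/κ) / (1 - 1/κ)^2 ≤ 1 / (1 - 1/κ)^2 := by
              gcongr
          _ = θ^2 := by rw [one_div, ← inv_pow, hinv]
      calc (1/p) * ∑ k ∈ Finset.range n, (k:ℝ) * (1/κ) ^ k ≤ (1/p) * θ^2 :=
            mul_le_mul_of_nonneg_left (hle.trans hle2) (by positivity)
        _ = θ^2 * (1/p) := by ring
    -- combine
    calc (∏ k ∈ Finset.range n,
            (C * (1 + p * κ ^ k) ^ a / ((1 - δ) * (1/2 : ℝ) ^ (k+1)) ^ a) ^ (1 / (p * κ ^ k)))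
        ≤ ∏ k ∈ Finset.range n, (D ^ (1 / (p * κ ^ k)) * E ^ ((k:ℝ) * (1 / (p * κ ^ k)))) :=
          Finset.prod_le_prod (fun k _ => by positivity) (fun k _ => hterm k)
      _ = D ^ (∑ k ∈ Finset.range n, 1 / (p * κ ^ k)) *
          E ^ (∑ k ∈ Finset.range n, (k:ℝ) * (1 / (p * κ ^ k))) := by
          rw [Finset.prod_mul_distrib, moser_prod_rpow_sum hD0, moser_prod_rpow_sum hE0]
      _ ≤ D ^ (θ * (1/p)) * E ^ (θ^2 * (1/p)) :=
          mul_le_mul (Real.rpow_le_rpow_of_exponent_le hD1 hsum1)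
            (Real.rpow_le_rpow_of_exponent_le hE1 hsum2) (by positivity) (by positivity)
      _ = (Mc * C ^ θ / (1 - δ) ^ (a * θ)) ^ (1 / p) := by
          rw [Real.rpow_mul hD0.le, Real.rpow_mul hE0.le,
            ← Real.mul_rpow (by positivity) (by positivity)]
          congr 1
          rw [hDdef, hEdef, hMcdef,
            Real.div_rpow (by positivity) (by positivity),
            Real.mul_rpow (by positivity) (by positivity),
            Real.mul_rpow (by positivity) (by positivity),
            ← Real.rpow_mul (by positivity), ← Real.rpow_mul (by positivity),
            ← Real.rpow_mul (by positivity), ← Real.rpow_mul (by positivity),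
            Real.mul_rpow (by norm_num) (by linarith),
            Real.mul_rpow (by norm_num) (by linarith)]
          ring_nf
  -- main part
  rw [show a * κ / (κ - 1) = a * θ by rw [hθdef]; ring]
  by_cases hM : AEMeasurable (fun t => μx.map (Prod.mk t)) μt
  swap
  · rw [moser_prod_zero μx hM, Measure.restrict_zero, essSup_measure_zero]
    exact bot_le
  by_contra hcon
  push_neg at hcon
  obtain ⟨c, hRc, hce⟩ := exists_between hcon
  obtain ⟨c', hcc', hc'e⟩ := exists_between hce
  have hc'top : c' ≠ ⊤ := hc'e.ne_top
  have hc'0 : c' ≠ 0 := (zero_le.trans_lt hcc').ne'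
  set lam : ℝ := c'.toReal with hlamdef
  have hlam : 0 < lam := ENNReal.toReal_pos hc'0 hc'top
  have hW : MeasurableSet {z : T × X | c' < ENNReal.ofReal |f z|} :=
    measurableSet_lt measurable_const (hf.abs.ennreal_ofReal)
  have hAm : MeasurableSet (Ut δ ×ˢ Ux δ) := hUtδm.prod hUxδm
  set S : Set (T × X) := (Ut δ ×ˢ Ux δ) ∩ {z | c' < ENNReal.ofReal |f z|} with hSdef
  have hSm : MeasurableSet S := hAm.inter hW
  have hS0 : (μt.prod μx) S ≠ 0 := by
    intro h0
    have hae : ∀ᵐ z ∂((μt.prod μx).restrict (Ut δ ×ˢ Ux δ)),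
        ENNReal.ofReal |f z| ≤ c' := by
      rw [ae_iff]
      have hset : {z : T × X | ¬ ENNReal.ofReal |f z| ≤ c'} =
          {z | c' < ENNReal.ofReal |f z|} := by simp [not_le]
      rw [hset, Measure.restrict_apply hW, Set.inter_comm, ← hSdef, h0]
    exact absurd (essSup_le_of_ae_le c' hae) (not_le.2 hc'e)
  set St : T → Set X := fun t => Ux δ ∩ {x | c' < ENNReal.ofReal |f (t, x)|} with hStdef
  have hStm : ∀ t, MeasurableSet (St t) := fun t =>
    hUxδm.inter (measurableSet_lt measurable_const
      ((hf.comp measurable_prodMk_left).abs.ennreal_ofReal))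
  have hStsub : ∀ t, St t ⊆ Ux δ := fun t => Set.inter_subset_left
  have hsec : ∀ t, μx (Prod.mk t ⁻¹' S) = (Ut δ).indicator (fun t => μx (St t)) t := by
    intro t
    by_cases ht : t ∈ Ut δ
    · rw [Set.indicator_of_mem ht]
      congr 1
      ext x
      simp [hSdef, hStdef, ht]
    · rw [Set.indicator_of_notMem ht]
      have hemp : Prod.mk t ⁻¹' S = ∅ := by
        ext x; simp [hSdef, ht]
      rw [hemp, measure_empty]
  have h1 : ∫⁻ t in Ut δ, μx (St t) ∂μt ≠ 0 := by
    rw [moser_prod_apply hM hSm] at hS0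
    rwa [lintegral_congr hsec, lintegral_indicator hUtδm] at hS0
  have haem : AEMeasurable (fun t => μx (St t)) (μt.restrict (Ut δ)) := by
    have h2 : AEMeasurable (fun t => μx (Prod.mk t ⁻¹' S)) μt := by
      have h3 := (Measure.measurable_coe hSm).comp_aemeasurable hM
      exact h3.congr (Filter.Eventually.of_forall fun t =>
        Measure.map_apply measurable_prodMk_left hSm)
    refine (h2.restrict).congr ((ae_restrict_iff' hUtδm).2
      (Filter.Eventually.of_forall fun t ht => ?_))
    show μx (Prod.mk t ⁻¹' S) = μx (St t)
    rw [hsec t, Set.indicator_of_mem ht]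
  set I : ℝ≥0∞ := ∫⁻ t in Ut δ, (μx (St t)) ^ (β₁ / β₂) ∂μt with hIdef
  have hI0 : I ≠ 0 := by
    intro h0
    apply h1
    have haem2 : AEMeasurable (fun t => (μx (St t)) ^ (β₁ / β₂)) (μt.restrict (Ut δ)) :=
      haem.pow aemeasurable_const
    have hz := (lintegral_eq_zero_iff' haem2).1 h0
    refine (lintegral_eq_zero_iff' haem).2 ?_
    filter_upwards [hz] with t ht
    rcases ENNReal.rpow_eq_zero_iff.1 ht with ⟨h, _⟩ | ⟨_, hneg⟩
    · exact h
    · linarith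
  have hlow : ∀ P Q : ℝ, 0 < P → 0 < Q → Q * (β₁ / β₂) = P →
      c' * I ^ (1/P) ≤ mixedNorm μt μx (Ut δ) (Ux δ) P Q f := by
    intro P Q hP hQ hQP
    have hPQ : P / Q = β₁ / β₂ := by
      rw [← hQP, mul_comm, mul_div_assoc, div_self hQ.ne', mul_one]
    have hinner : ∀ t, ENNReal.ofReal (lam ^ Q) * μx (St t) ≤
        ∫⁻ x in Ux δ, ENNReal.ofReal (|f (t, x)| ^ Q) ∂μx := by
      intro t
      calc ENNReal.ofReal (lam ^ Q) * μx (St t)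
          = ∫⁻ _ in St t, ENNReal.ofReal (lam ^ Q) ∂μx := by
            rw [setLIntegral_const]
        _ ≤ ∫⁻ x in St t, ENNReal.ofReal (|f (t, x)| ^ Q) ∂μx := by
            refine setLIntegral_mono' (hStm t) fun x hx => ?_
            have hlt : lam < |f (t, x)| :=
              (ENNReal.lt_ofReal_iff_toReal_lt hc'top).1 hx.2
            exact ENNReal.ofReal_le_ofReal
              (Real.rpow_le_rpow hlam.le hlt.le hQ.le)
        _ ≤ ∫⁻ x in Ux δ, ENNReal.ofReal (|f (t, x)| ^ Q) ∂μx :=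
            lintegral_mono_set (hStsub t)
    have hofReal : (ENNReal.ofReal (lam ^ Q)) ^ (β₁ / β₂) = ENNReal.ofReal (lam ^ P) := by
      rw [ENNReal.ofReal_rpow_of_pos (Real.rpow_pos_of_pos hlam Q),
        ← Real.rpow_mul hlam.le, hQP]
    have houter : ENNReal.ofReal (lam ^ P) * I ≤
        ∫⁻ t in Ut δ, (∫⁻ x in Ux δ, ENNReal.ofReal (|f (t, x)| ^ Q) ∂μx) ^ (P/Q) ∂μt := by
      rw [hPQ, hIdef, ← lintegral_const_mul' _ _ ENNReal.ofReal_ne_top]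
      refine lintegral_mono fun t => ?_
      rw [← hofReal, ← ENNReal.mul_rpow_of_nonneg _ _ hρ.le]
      exact ENNReal.rpow_le_rpow (hinner t) hρ.le
    calc c' * I ^ (1/P)
        = (ENNReal.ofReal (lam ^ P) * I) ^ (1/P) := by
          rw [ENNReal.mul_rpow_of_nonneg _ _ (by positivity : (0:ℝ) ≤ 1/P),
            ENNReal.ofReal_rpow_of_pos (Real.rpow_pos_of_pos hlam P),
            ← Real.rpow_mul hlam.le, mul_one_div_cancel hP.ne', Real.rpow_one,
            hlamdef, ENNReal.ofReal_toReal hc'top]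
      _ ≤ (∫⁻ t in Ut δ,
            (∫⁻ x in Ux δ, ENNReal.ofReal (|f (t, x)| ^ Q) ∂μx) ^ (P/Q) ∂μt) ^ (1/P) :=
          ENNReal.rpow_le_rpow houter (by positivity)
      _ = mixedNorm μt μx (Ut δ) (Ux δ) P Q f := rfl
  have hex : ∃ n : ℕ, c < c' * I ^ (1 / (β₁ * (p * κ ^ n))) := by
    by_cases hItop : I = ⊤
    · refine ⟨0, ?_⟩
      rw [hItop, ENNReal.top_rpow_of_pos (by positivity), ENNReal.mul_top hc'0]
      exact hcc'.trans_le le_top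
    · have hb : 0 < I.toReal := ENNReal.toReal_pos hI0 hItop
      have h0 : Tendsto (fun n : ℕ => 1 / (β₁ * (p * κ ^ n))) atTop (𝓝 0) := by
        have h1' : Tendsto (fun n : ℕ => β₁ * (p * κ ^ n)) atTop atTop :=
          ((tendsto_pow_atTop_atTop_of_one_lt hκ).const_mul_atTop hp).const_mul_atTop hβ₁0
        exact h1'.inv_tendsto_atTop.congr fun n => (one_div _).symm
      have hcont : Continuous fun y : ℝ => I.toReal ^ y := by
        have heq : (fun y : ℝ => I.toReal ^ y) =
            fun y => Real.exp (Real.log I.toReal * y) := by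
          funext y; rw [Real.rpow_def_of_pos hb]
        rw [heq]
        exact Real.continuous_exp.comp (continuous_const.mul continuous_id)
      have h2 : Tendsto (fun n : ℕ => I.toReal ^ (1 / (β₁ * (p * κ ^ n)))) atTop (𝓝 1) := by
        have := (hcont.tendsto 0).comp h0
        simpa [Function.comp_def, Real.rpow_zero] using this
      have h3 : Tendsto (fun n : ℕ => c' * I ^ (1 / (β₁ * (p * κ ^ n)))) atTop (𝓝 c') := by
        have h4 : Tendsto (fun n : ℕ => ENNReal.ofReal (I.toReal ^ (1 / (β₁ * (p * κ ^ n)))))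
            atTop (𝓝 1) := by
          have := (ENNReal.continuous_ofReal.tendsto 1).comp h2
          simpa [Function.comp_def] using this
        have h5 : (fun n : ℕ => ENNReal.ofReal (I.toReal ^ (1 / (β₁ * (p * κ ^ n))))) =
            fun n : ℕ => I ^ (1 / (β₁ * (p * κ ^ n))) := by
          funext n
          rw [← ENNReal.ofReal_rpow_of_pos hb, ENNReal.ofReal_toReal hItop]
        rw [h5] at h4
        have := ENNReal.Tendsto.const_mul h4 (Or.inr hc'top)
        simpa using this
      exact (h3.eventually (eventually_gt_nhds hcc')).exists
  obtain ⟨n, hn⟩ := hex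
  have hQPn : (β₂ * (p * κ ^ n)) * (β₁ / β₂) = β₁ * (p * κ ^ n) := by
    field_simp
  have hchain : c < mixedNorm μt μx (Ut (moserSigma δ n)) (Ux (moserSigma δ n))
      (β₁ * (p * κ ^ n)) (β₂ * (p * κ ^ n)) f := by
    refine hn.trans_le ((hlow _ _ (by positivity) (by positivity) hQPn).trans ?_)
    exact moser_mixedNorm_mono μt μx
      (hUtmono δ (moserSigma δ n) hδ0 (hσ_gt n).le (hσ_le_one n))
      (hUxmono δ (moserSigma δ n) hδ0 (hσ_gt n).le (hσ_le_one n))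
      (by positivity) (by positivity) f
  have hfin : c ≤ ENNReal.ofReal ((Mc * C ^ θ / (1 - δ) ^ (a * θ)) ^ (1 / p)) *
      mixedNorm μt μx (Ut 1) (Ux 1) (β₁ * p) (β₂ * p) f :=
    hchain.le.trans ((key n).trans
      (mul_le_mul_left (ENNReal.ofReal_le_ofReal (prodbound n)) _))
  exact absurd hfin (not_le.2 hRc)
end

section
/- Let T > 0 and let l ∈ L₁((0,T)) ∩ C¹((0,T)) be nonnegative and nonincreasing. Let φ ∈ C¹([0,T]) and let v : [0,T] → ℝ be given by v(t) = ∫₀^t v̇(σ) dσ for some v̇ ∈ L₁((0,T)) (so v is absolutely continuous with v(0) = 0). Then for almost every t ∈ (0,T): ∫₀^t l(t−σ)·φ(σ)·v̇(σ) dσ = φ(t)·∫₀^t l(t−σ)·v̇(σ) dσ + ∫₀^t v(σ)·[ −l'(t−σ)·(φ(t)−φ(σ)) − l(t−σ)·φ̇(σ) ] dσ, where l' denotes the derivative of l. -/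
open MeasureTheory Set intervalIntegral Filter Topology

/-- The primitive of `‖l‖` tends to `0` at `0⁺`. -/
private lemma tendsto_primitive_norm_zero {T : ℝ} (hT : 0 < T) {l : ℝ → ℝ}
    (hl_int : IntegrableOn l (Ioo 0 T)) :
    Tendsto (fun u => ∫ x in Ioo 0 u, ‖l x‖) (𝓝[>] (0:ℝ)) (𝓝 0) := by
  have hhalf : IntegrableOn (fun x => ‖l x‖) (Icc 0 (T/2)) := by
    rw [integrableOn_Icc_iff_integrableOn_Ioo]
    exact (hl_int.mono_set (Ioo_subset_Ioo le_rfl (by linarith))).norm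
  have hcont := intervalIntegral.continuousOn_primitive (f := fun x => ‖l x‖)
      (a := 0) (b := T/2) (μ := volume) hhalf
  have h0 : (0:ℝ) ∈ Icc (0:ℝ) (T/2) := ⟨le_rfl, by linarith⟩
  have h1 : Tendsto (fun u => ∫ x in Ioc 0 u, ‖l x‖) (𝓝[>] (0:ℝ)) (𝓝 0) := by
    have h2 := (hcont 0 h0)
    have h3 : (∫ x in Ioc (0:ℝ) 0, ‖l x‖) = 0 := by simp
    rw [ContinuousWithinAt, h3] at h2
    refine h2.mono_left ?_
    rw [← nhdsWithin_Ioc_eq_nhdsGT (show (0:ℝ) < T/2 by linarith)]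
    exact nhdsWithin_mono _ Ioc_subset_Icc_self
  simpa only [integral_Ioc_eq_integral_Ioo] using h1

private lemma mul_l_le_integral {T : ℝ} {l : ℝ → ℝ}
    (hl_int : IntegrableOn l (Ioo 0 T))
    (hl_nonneg : ∀ t ∈ Ioo (0:ℝ) T, 0 ≤ l t)
    (hl_mono : AntitoneOn l (Ioo 0 T)) :
    ∀ u ∈ Ioo (0:ℝ) T, u * l u ≤ 2 * ∫ x in Ioo 0 u, ‖l x‖ := by
  intro u hu
  have h2 : Ioo (u/2) u ⊆ Ioo 0 T := Ioo_subset_Ioo (by linarith [hu.1]) hu.2.le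
  have hconst : (u/2) * l u = ∫ _x in Ioo (u/2) u, l u := by
    rw [setIntegral_const, Real.volume_real_Ioo_of_le (by linarith [hu.1]),
      smul_eq_mul]
    ring
  have hmono : (∫ _x in Ioo (u/2) u, l u) ≤ ∫ x in Ioo (u/2) u, l x := by
    refine setIntegral_mono_on (integrableOn_const (by rw [Real.volume_Ioo]; exact ENNReal.ofReal_ne_top)) (hl_int.mono_set h2)
      measurableSet_Ioo (fun x hx => hl_mono (h2 hx) hu hx.2.le)
  have h3 : (∫ x in Ioo (u/2) u, l x) ≤ ∫ x in Ioo (u/2) u, ‖l x‖ :=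
    setIntegral_mono_on (hl_int.mono_set h2) (hl_int.mono_set h2).norm
      measurableSet_Ioo (fun x _ => le_abs_self _)
  have h4 : (∫ x in Ioo (u/2) u, ‖l x‖) ≤ ∫ x in Ioo 0 u, ‖l x‖ := by
    refine setIntegral_mono_set
      ((hl_int.mono_set (Ioo_subset_Ioo le_rfl hu.2.le)).norm) ?_ ?_
    · exact Eventually.of_forall (fun x => norm_nonneg _)
    · exact HasSubset.Subset.eventuallyLE (Ioo_subset_Ioo (by linarith [hu.1]) le_rfl)
  linarith

private lemma tendsto_ul_zero {T : ℝ} (hT : 0 < T) {l : ℝ → ℝ}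
    (hl_int : IntegrableOn l (Ioo 0 T))
    (hl_nonneg : ∀ t ∈ Ioo (0:ℝ) T, 0 ≤ l t)
    (hl_mono : AntitoneOn l (Ioo 0 T)) :
    Tendsto (fun u => u * l u) (𝓝[>] (0:ℝ)) (𝓝 0) := by
  apply squeeze_zero_norm' (a := fun u => 2 * ∫ x in Ioo 0 u, ‖l x‖)
  · filter_upwards [Ioo_mem_nhdsGT hT] with u hu
    rw [Real.norm_eq_abs, abs_of_nonneg (mul_nonneg hu.1.le (hl_nonneg u hu))]
    exact mul_l_le_integral hl_int hl_nonneg hl_mono u hu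
  · simpa using (tendsto_primitive_norm_zero hT hl_int).const_mul 2

private lemma l'_nonpos {T : ℝ} {l l' : ℝ → ℝ}
    (hl_deriv : ∀ t ∈ Ioo (0:ℝ) T, HasDerivAt l (l' t) t)
    (hl_mono : AntitoneOn l (Ioo 0 T)) :
    ∀ s ∈ Ioo (0:ℝ) T, l' s ≤ 0 := by
  intro s hs
  have hd : Tendsto (slope l s) (𝓝[>] s) (𝓝 (l' s)) :=
    ((hasDerivAt_iff_tendsto_slope.1 (hl_deriv s hs)).mono_left
      (nhdsWithin_mono _ (fun x hx => ne_of_gt hx)))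
  refine le_of_tendsto hd ?_
  filter_upwards [Ioo_mem_nhdsGT hs.2] with x hx
  have hxm : x ∈ Ioo (0:ℝ) T := ⟨lt_trans hs.1 hx.1, hx.2⟩
  have : l x ≤ l s := hl_mono hs hxm hx.1.le
  rw [slope_def_field]
  exact div_nonpos_of_nonpos_of_nonneg (by linarith) (by linarith [hx.1])

private lemma ul'_integrable {T : ℝ} (hT : 0 < T) {l l' : ℝ → ℝ}
    (hl_int : IntegrableOn l (Ioo 0 T))
    (hl_deriv : ∀ t ∈ Ioo (0:ℝ) T, HasDerivAt l (l' t) t)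
    (hl'_cont : ContinuousOn l' (Ioo 0 T))
    (hl_nonneg : ∀ t ∈ Ioo (0:ℝ) T, 0 ≤ l t)
    (hl_mono : AntitoneOn l (Ioo 0 T)) {c : ℝ} (hc : c ∈ Ioo (0:ℝ) T) :
    IntegrableOn (fun u => u * l' u) (Ioc 0 c) := by
  have hlc : ContinuousOn l (Ioo 0 T) :=
    fun s hs => (hl_deriv s hs).continuousAt.continuousWithinAt
  set B := ∫ x in Ioo 0 T, ‖l x‖ with hB
  have hBn : 0 ≤ B := integral_nonneg (fun x => norm_nonneg _)
  have hεpos : ∀ n : ℕ, 0 < c / (n + 2) := fun n => div_pos hc.1 (by positivity)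
  have hεle : ∀ n : ℕ, c / (n + 2) ≤ c := fun n => by
    apply div_le_self hc.1.le; push_cast; linarith
  have hsubn : ∀ n : ℕ, Icc (c / (n + 2)) c ⊆ Ioo 0 T :=
    fun n x hx => ⟨lt_of_lt_of_le (hεpos n) hx.1, lt_of_le_of_lt hx.2 hc.2⟩
  refine integrableOn_Ioc_of_intervalIntegral_norm_bounded_left
    (I := 3 * B) (a := fun n : ℕ => c / (n + 2)) (l := atTop) ?_ ?_ ?_
  · intro n
    have : ContinuousOn (fun u => u * l' u) (Icc (c / (n + 2)) c) :=
      (continuousOn_id.mul (hl'_cont.mono (hsubn n)))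
    exact this.integrableOn_Icc.mono_set Ioc_subset_Icc_self
  · have h := (tendsto_const_div_atTop_nhds_zero_nat c).comp (tendsto_add_atTop_nat 2)
    convert h using 2 with n
    simp [Function.comp]
  · refine Eventually.of_forall (fun n => ?_)
    set ε := c / (n + 2) with hε
    have hε0 : 0 < ε := hεpos n
    have hεc : ε ≤ c := hεle n
    have hεT : ε ∈ Ioo (0:ℝ) T := ⟨hε0, lt_of_le_of_lt hεc hc.2⟩
    have hsub : Icc ε c ⊆ Ioo 0 T := hsubn n
    have huIcc : uIcc ε c = Icc ε c := uIcc_of_le hεc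
    -- rewrite norm
    have h1 : (∫ x in Ioc ε c, ‖x * l' x‖) = ∫ x in Ioc ε c, -(x * l' x) := by
      refine setIntegral_congr_fun measurableSet_Ioc (fun x hx => ?_)
      have hx' : x ∈ Ioo 0 T := hsub ⟨hx.1.le, hx.2⟩
      rw [Real.norm_eq_abs, abs_of_nonpos
        (mul_nonpos_of_nonneg_of_nonpos (lt_of_lt_of_le hε0 hx.1.le).le
          (l'_nonpos hl_deriv hl_mono x hx'))]
    -- FTC
    have hii_l : IntervalIntegrable l volume ε c :=
      ((hlc.mono (huIcc ▸ hsub)).intervalIntegrable)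
    have hii_ul' : IntervalIntegrable (fun x => x * l' x) volume ε c :=
      ((continuousOn_id.mul (hl'_cont.mono (huIcc ▸ hsub))).intervalIntegrable)
    have hft : (∫ x in ε..c, (l x + x * l' x)) = c * l c - ε * l ε := by
      have hder : ∀ x ∈ uIcc ε c, HasDerivAt (fun y => y * l y) (l x + x * l' x) x := by
        intro x hx
        have hx' : x ∈ Ioo 0 T := hsub (huIcc ▸ hx)
        exact ((hasDerivAt_id' (x := x)).mul (hl_deriv x hx')).congr_deriv (by ring)
      simpa using integral_eq_sub_of_hasDerivAt hder (hii_l.add hii_ul')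
    have hadd : (∫ x in ε..c, (l x + x * l' x)) =
        (∫ x in ε..c, l x) + ∫ x in ε..c, x * l' x :=
      integral_add hii_l hii_ul'
    -- bounds
    have hb1 : (∫ x in ε..c, l x) ≤ B := by
      rw [intervalIntegral.integral_of_le hεc]
      calc (∫ x in Ioc ε c, l x) ≤ ∫ x in Ioc ε c, ‖l x‖ :=
            setIntegral_mono_on ((hl_int.mono_set (fun x hx => hsub ⟨hx.1.le, hx.2⟩)))
              ((hl_int.mono_set (fun x hx => hsub ⟨hx.1.le, hx.2⟩)).norm)
              measurableSet_Ioc (fun x _ => le_abs_self _)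
        _ ≤ B := setIntegral_mono_set hl_int.norm
              (Eventually.of_forall (fun x => norm_nonneg _))
              (HasSubset.Subset.eventuallyLE (fun x hx => hsub ⟨hx.1.le, hx.2⟩))
    have hb2 : ε * l ε ≤ 2 * B := by
      calc ε * l ε ≤ 2 * ∫ x in Ioo 0 ε, ‖l x‖ :=
            mul_l_le_integral hl_int hl_nonneg hl_mono ε hεT
        _ ≤ 2 * B := by
            have : (∫ x in Ioo 0 ε, ‖l x‖) ≤ B :=
              setIntegral_mono_set hl_int.norm
                (Eventually.of_forall (fun x => norm_nonneg _))
                (HasSubset.Subset.eventuallyLE (Ioo_subset_Ioo le_rfl hεT.2.le))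
            linarith
    have hb3 : 0 ≤ c * l c := mul_nonneg hc.1.le (hl_nonneg c hc)
    have h2 : (∫ x in Ioc ε c, -(x * l' x)) = -(∫ x in ε..c, x * l' x) := by
      rw [← intervalIntegral.integral_of_le hεc, intervalIntegral.integral_neg]
    rw [h1, h2]
    have : (∫ x in ε..c, x * l' x) = (c * l c - ε * l ε) - ∫ x in ε..c, l x := by
      rw [← hft, hadd]; ring
    rw [this]
    linarith

/-- Lemma 2.3, first identity: for `l ∈ L₁((0,T)) ∩ C¹((0,T))` nonnegative and
nonincreasing, `φ ∈ C¹([0,T])` and `v(t) = ∫₀ᵗ v̇`, for a.e. `t ∈ (0,T)` one has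
`(l * (φ v̇))(t) = φ(t) (l * v̇)(t) + ∫₀ᵗ v(σ) ∂_σ( l(t-σ)(φ(t)-φ(σ)) ) dσ`. -/
theorem convolution_identity (T : ℝ) (hT : 0 < T)
    (l l' φ φ' vdot : ℝ → ℝ) (v : ℝ → ℝ)
    (hl_int : IntegrableOn l (Ioo 0 T))
    (hl_deriv : ∀ t ∈ Ioo (0:ℝ) T, HasDerivAt l (l' t) t)
    (hl'_cont : ContinuousOn l' (Ioo 0 T))
    (hl_nonneg : ∀ t ∈ Ioo (0:ℝ) T, 0 ≤ l t)
    (hl_mono : AntitoneOn l (Ioo 0 T))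
    (hφ_deriv : ∀ t ∈ Icc (0:ℝ) T, HasDerivWithinAt φ (φ' t) (Icc 0 T) t)
    (hφ'_cont : ContinuousOn φ' (Icc 0 T))
    (hvdot : IntegrableOn vdot (Ioo 0 T))
    (hv : ∀ t ∈ Icc (0:ℝ) T, v t = ∫ σ in (0:ℝ)..t, vdot σ) :
    ∀ᵐ t : ℝ, t ∈ Ioo 0 T →
      (∫ σ in (0:ℝ)..t, l (t - σ) * (φ σ * vdot σ)) =
        φ t * (∫ σ in (0:ℝ)..t, l (t - σ) * vdot σ) +
          ∫ σ in (0:ℝ)..t,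
            v σ * (-(l' (t - σ)) * (φ t - φ σ) - l (t - σ) * φ' σ) := by
  have hlc : ContinuousOn l (Ioo 0 T) :=
    fun s hs => (hl_deriv s hs).continuousAt.continuousWithinAt
  have hφc : ContinuousOn φ (Icc 0 T) := fun s hs => (hφ_deriv s hs).continuousWithinAt
  obtain ⟨C₁, hC₁⟩ := isCompact_Icc.exists_bound_of_continuousOn hφ'_cont
  obtain ⟨C₀, hC₀⟩ := isCompact_Icc.exists_bound_of_continuousOn hφc
  have hC₁0 : 0 ≤ C₁ := le_trans (norm_nonneg _) (hC₁ 0 ⟨le_rfl, hT.le⟩)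
  have hφlip : ∀ a ∈ Icc (0:ℝ) T, ∀ b ∈ Icc (0:ℝ) T, ‖φ b - φ a‖ ≤ C₁ * ‖b - a‖ :=
    fun a ha b hb =>
      (convex_Icc (0:ℝ) T).norm_image_sub_le_of_norm_hasDerivWithin_le hφ_deriv hC₁ ha hb
  have hmIooT : MeasurableSet (Ioo (0:ℝ) T) := measurableSet_Ioo
  set V : ℝ → ℝ := (Ioo 0 T).indicator vdot with hVdef
  have hVint : Integrable V volume := by
    rw [hVdef, integrable_indicator_iff hmIooT]; exact hvdot
  set Lf : ℝ → ℝ := (Ioo 0 T).indicator l with hLdef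
  have hLint : Integrable Lf volume := by
    rw [hLdef, integrable_indicator_iff hmIooT]; exact hl_int
  have hconv := hVint.ae_convolution_exists (L := ContinuousLinearMap.mul ℝ ℝ) hLint
  filter_upwards [hconv] with t hct ht
  obtain ⟨ht0, htT⟩ := ht
  simp only [ConvolutionExistsAt, ContinuousLinearMap.mul_apply'] at hct
  have hsub1 : Ioo (0:ℝ) t ⊆ Ioo 0 T := Ioo_subset_Ioo le_rfl htT.le
  have hsub2 : Ioo (0:ℝ) t ⊆ Icc 0 T := fun x hx => ⟨hx.1.le, le_trans hx.2.le htT.le⟩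
  have hmap : ∀ σ ∈ Ioo (0:ℝ) t, t - σ ∈ Ioo (0:ℝ) T :=
    fun σ hσ => ⟨by linarith [hσ.2], by linarith [hσ.1]⟩
  -- integrability of the convolution integrand
  have h_lv : IntegrableOn (fun σ => l (t - σ) * vdot σ) (Ioo 0 t) := by
    refine (hct.integrableOn (s := Ioo 0 t)).congr_fun (fun σ hσ => ?_) measurableSet_Ioo
    beta_reduce
    rw [hVdef, hLdef, indicator_of_mem (hsub1 hσ), indicator_of_mem (hmap σ hσ)]
    ring
  have h_aesm_l : AEStronglyMeasurable (fun σ => l (t - σ)) (volume.restrict (Ioo 0 t)) := by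
    refine ContinuousOn.aestronglyMeasurable ?_ measurableSet_Ioo
    exact hlc.comp ((continuous_const.sub continuous_id).continuousOn) hmap
  have h_aesm_φ : AEStronglyMeasurable φ (volume.restrict (Ioo 0 t)) :=
    (hφc.mono hsub2).aestronglyMeasurable measurableSet_Ioo
  have h_aesm_v : AEStronglyMeasurable vdot (volume.restrict (Ioo 0 t)) :=
    (hvdot.mono_set hsub1).1
  have h_lφv : IntegrableOn (fun σ => l (t - σ) * (φ σ * vdot σ)) (Ioo 0 t) := by
    refine Integrable.mono' ((h_lv.norm).const_mul C₀)
      (h_aesm_l.mul (h_aesm_φ.mul h_aesm_v)) ?_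
    rw [ae_restrict_iff' measurableSet_Ioo]
    refine Eventually.of_forall (fun σ hσ => ?_)
    have hb : ‖φ σ‖ ≤ C₀ := hC₀ σ (hsub2 hσ)
    calc ‖l (t - σ) * (φ σ * vdot σ)‖ = ‖φ σ‖ * ‖l (t - σ) * vdot σ‖ := by
          simp only [norm_mul]; ring
      _ ≤ C₀ * ‖l (t - σ) * vdot σ‖ :=
          mul_le_mul_of_nonneg_right hb (norm_nonneg _)
  -- the auxiliary functions g and g'
  set g : ℝ → ℝ := fun σ => l (t - σ) * (φ t - φ σ) with hgdef
  set g' : ℝ → ℝ := fun σ => -(l' (t - σ)) * (φ t - φ σ) - l (t - σ) * φ' σ with hg'def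
  have hgderiv : ∀ σ ∈ Ioo (0:ℝ) t, HasDerivAt g (g' σ) σ := by
    intro σ hσ
    have h1 : HasDerivAt (fun x : ℝ => l (t - x)) (-(l' (t - σ))) σ := by
      have h0 : HasDerivAt (fun x : ℝ => t - x) (-1) σ := by
        simpa using (hasDerivAt_id σ).const_sub t
      have := (hl_deriv (t - σ) (hmap σ hσ)).comp σ h0
      exact this.congr_deriv (by ring)
    have h2 : HasDerivAt φ (φ' σ) σ :=
      (hφ_deriv σ (hsub2 hσ)).hasDerivAt
        (Icc_mem_nhds hσ.1 (lt_of_lt_of_le hσ.2 htT.le))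
    have h3 := h1.mul ((hasDerivAt_const σ (φ t)).sub h2)
    rw [hg'def, hgdef]
    exact h3.congr_deriv (by simp only [Pi.sub_apply]; ring)
  have hg'cont : ContinuousOn g' (Ioo 0 t) := by
    have hc1 : ContinuousOn (fun σ : ℝ => t - σ) (Ioo 0 t) :=
      (continuous_const.sub continuous_id).continuousOn
    exact ((hl'_cont.comp hc1 hmap).neg.mul
        (continuousOn_const.sub (hφc.mono hsub2))).sub
      ((hlc.comp hc1 hmap).mul (hφ'_cont.mono hsub2))
  have hIoc_sub : Ioc (0:ℝ) t ⊆ Ioo 0 T := fun x hx => ⟨hx.1, lt_of_le_of_lt hx.2 htT⟩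
  have hul'2 : IntegrableOn (fun σ => (t - σ) * l' (t - σ)) (Ioo 0 t) := by
    have h1 : IntervalIntegrable (fun u => u * l' u) volume 0 t :=
      (intervalIntegrable_iff_integrableOn_Ioc_of_le ht0.le).2
        (ul'_integrable hT hl_int hl_deriv hl'_cont hl_nonneg hl_mono ⟨ht0, htT⟩)
    have h2 := h1.comp_sub_left t
    rw [sub_zero, sub_self] at h2
    exact (intervalIntegrable_iff_integrableOn_Ioo_of_le ht0.le).1 h2.symm
  have hlts : IntegrableOn (fun σ => l (t - σ)) (Ioo 0 t) := by
    have h1 : IntervalIntegrable l volume 0 t :=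
      (intervalIntegrable_iff_integrableOn_Ioc_of_le ht0.le).2 (hl_int.mono_set hIoc_sub)
    have h2 := h1.comp_sub_left t
    rw [sub_zero, sub_self] at h2
    exact (intervalIntegrable_iff_integrableOn_Ioo_of_le ht0.le).1 h2.symm
  have hg'int : IntegrableOn g' (Ioo 0 t) := by
    refine Integrable.mono'
      ((hul'2.norm.const_mul C₁).add (hlts.norm.const_mul C₁))
      (hg'cont.aestronglyMeasurable measurableSet_Ioo) ?_
    rw [ae_restrict_iff' measurableSet_Ioo]
    refine Eventually.of_forall (fun σ hσ => ?_)
    have hφb : ‖φ t - φ σ‖ ≤ C₁ * (t - σ) := by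
      have := hφlip σ (hsub2 hσ) t ⟨ht0.le, htT.le⟩
      rwa [Real.norm_eq_abs (t - σ), abs_of_nonneg (by linarith [hσ.2])] at this
    have hφ'b : ‖φ' σ‖ ≤ C₁ := hC₁ σ (hsub2 hσ)
    calc ‖g' σ‖ ≤ ‖(-(l' (t - σ))) * (φ t - φ σ)‖ + ‖l (t - σ) * φ' σ‖ :=
          norm_sub_le _ _
      _ ≤ ‖l' (t - σ)‖ * (C₁ * (t - σ)) + ‖l (t - σ)‖ * C₁ := by
          rw [norm_mul, norm_mul, norm_neg]
          exact add_le_add (mul_le_mul_of_nonneg_left hφb (norm_nonneg _))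
            (mul_le_mul_of_nonneg_left hφ'b (norm_nonneg _))
      _ = C₁ * ‖(t - σ) * l' (t - σ)‖ + C₁ * ‖l (t - σ)‖ := by
          rw [norm_mul, Real.norm_eq_abs (t - σ), abs_of_nonneg (by linarith [hσ.2] : (0:ℝ) ≤ t - σ)]
          ring
  -- boundary limit of g at t
  have hmapt : Tendsto (fun σ => t - σ) (𝓝[<] t) (𝓝[>] (0:ℝ)) := by
    apply tendsto_nhdsWithin_of_tendsto_nhds_of_eventually_within
    · have h1 : Tendsto (fun σ : ℝ => t - σ) (𝓝 t) (𝓝 (t - t)) :=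
        (continuous_const.sub continuous_id).tendsto t
      rw [sub_self] at h1
      exact h1.mono_left nhdsWithin_le_nhds
    · filter_upwards [self_mem_nhdsWithin] with σ hσ
      simp only [mem_Iio] at hσ
      exact mem_Ioi.mpr (by linarith)
  have hgt0 : Tendsto g (𝓝[<] t) (𝓝 0) := by
    apply squeeze_zero_norm' (a := fun σ => C₁ * ((t - σ) * l (t - σ)))
    · filter_upwards [Ioo_mem_nhdsLT ht0] with σ hσ
      have hl0 : 0 ≤ l (t - σ) := hl_nonneg _ (hmap σ hσ)
      have hφb : ‖φ t - φ σ‖ ≤ C₁ * (t - σ) := by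
        have := hφlip σ (hsub2 hσ) t ⟨ht0.le, htT.le⟩
        rwa [Real.norm_eq_abs (t - σ), abs_of_nonneg (by linarith [hσ.2])] at this
      calc ‖g σ‖ = l (t - σ) * ‖φ t - φ σ‖ := by
            rw [hgdef]; simp only [norm_mul, Real.norm_eq_abs, abs_of_nonneg hl0]
        _ ≤ l (t - σ) * (C₁ * (t - σ)) :=
            mul_le_mul_of_nonneg_left hφb hl0
        _ = C₁ * ((t - σ) * l (t - σ)) := by ring
    · have := ((tendsto_ul_zero hT hl_int hl_nonneg hl_mono).comp hmapt).const_mul C₁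
      simpa using this
  -- FTC: g σ = -∫_{Ioo σ t} g'
  have hkey : ∀ σ ∈ Ioo (0:ℝ) t, g σ = -∫ s in Ioo σ t, g' s := by
    intro σ hσ
    have hInt : IntegrableOn g' (Ioo σ t) := hg'int.mono_set (Ioo_subset_Ioo hσ.1.le le_rfl)
    have hIcc : IntegrableOn g' (Icc σ t) := (integrableOn_Icc_iff_integrableOn_Ioo (f := g') (a := σ) (b := t)).2 hInt
    have hP : ContinuousOn (fun u => ∫ s in Ioc σ u, g' s) (Icc σ t) :=
      intervalIntegral.continuousOn_primitive hIcc
    have hPt : Tendsto (fun u => ∫ s in Ioc σ u, g' s) (𝓝[<] t)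
        (𝓝 (∫ s in Ioc σ t, g' s)) := by
      refine (hP t (right_mem_Icc.2 hσ.2.le)).mono_left ?_
      rw [← nhdsWithin_Ico_eq_nhdsLT hσ.2]
      exact nhdsWithin_mono _ Ico_subset_Icc_self
    have hPt2 : Tendsto (fun u => ∫ s in Ioc σ u, g' s) (𝓝[<] t) (𝓝 (0 - g σ)) := by
      have hEv : ∀ᶠ u in 𝓝[<] t, g u - g σ = ∫ s in Ioc σ u, g' s := by
        filter_upwards [Ioo_mem_nhdsLT hσ.2] with u hu
        have hsub3 : Icc σ u ⊆ Ioo 0 t :=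
          fun x hx => ⟨lt_of_lt_of_le hσ.1 hx.1, lt_of_le_of_lt hx.2 hu.2⟩
        have hd : ∀ x ∈ uIcc σ u, HasDerivAt g (g' x) x := by
          rw [uIcc_of_le hu.1.le]
          exact fun x hx => hgderiv x (hsub3 hx)
        have hii : IntervalIntegrable g' volume σ u :=
          (intervalIntegrable_iff_integrableOn_Ioo_of_le hu.1.le).2
            (hg'int.mono_set (fun x hx => hsub3 ⟨hx.1.le, hx.2.le⟩))
        have := integral_eq_sub_of_hasDerivAt hd hii
        rw [intervalIntegral.integral_of_le hu.1.le] at this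
        exact this.symm
      exact Tendsto.congr' hEv (hgt0.sub_const (g σ))
    have h := tendsto_nhds_unique hPt hPt2
    rw [integral_Ioc_eq_integral_Ioo] at h
    linarith
  -- Fubini
  have hmIoot : MeasurableSet (Ioo (0:ℝ) t) := measurableSet_Ioo
  set G2 : ℝ → ℝ := (Ioo 0 t).indicator g' with hG2def
  have hG2int : Integrable G2 := (integrable_indicator_iff hmIoot).2 hg'int
  set F : ℝ × ℝ → ℝ :=
    fun p => ({q : ℝ × ℝ | q.1 < q.2}).indicator (fun q => V q.1 * G2 q.2) p with hFdef
  have hFint : Integrable F (volume.prod volume) :=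
    (hVint.mul_prod hG2int).indicator (measurableSet_lt measurable_fst measurable_snd)
  have hswap : (∫ σ : ℝ, ∫ s : ℝ, F (σ, s)) = ∫ s : ℝ, ∫ σ : ℝ, F (σ, s) :=
    integral_integral_swap (f := fun σ s => F (σ, s)) hFint
  have hinner1 : ∀ σ : ℝ, (∫ s : ℝ, F (σ, s)) = V σ * ∫ s in Ioi σ, G2 s := by
    intro σ
    have : (fun s : ℝ => F (σ, s)) = fun s => V σ * (Ioi σ).indicator G2 s := by
      funext s
      by_cases h : σ < s
      · simp [hFdef, indicator_of_mem, h, mem_setOf_eq, mem_Ioi]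
      · simp [hFdef, indicator_of_notMem, h, mem_setOf_eq, mem_Ioi]
    rw [this, MeasureTheory.integral_const_mul, MeasureTheory.integral_indicator measurableSet_Ioi]
  have hinner2 : ∀ s : ℝ, (∫ σ : ℝ, F (σ, s)) = G2 s * ∫ σ in Iio s, V σ := by
    intro s
    have : (fun σ : ℝ => F (σ, s)) = fun σ => G2 s * (Iio s).indicator V σ := by
      funext σ
      by_cases h : σ < s
      · simp [hFdef, indicator_of_mem, h, mem_setOf_eq, mem_Iio, mul_comm]
      · simp [hFdef, indicator_of_notMem, h, mem_setOf_eq, mem_Iio]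
    rw [this, MeasureTheory.integral_const_mul, MeasureTheory.integral_indicator measurableSet_Iio]
  have hleft : (fun σ : ℝ => V σ * ∫ s in Ioi σ, G2 s) =
      (Ioo (0:ℝ) t).indicator (fun σ => vdot σ * -(g σ)) := by
    funext σ
    by_cases hσt : t ≤ σ
    · have hzero : (∫ s in Ioi σ, G2 s) = 0 := by
        rw [hG2def, setIntegral_indicator hmIoot,
          show Ioi σ ∩ Ioo 0 t = (∅ : Set ℝ) by
            ext x
            simp only [mem_inter_iff, mem_Ioi, mem_Ioo, mem_empty_iff_false, iff_false, not_and]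
            intro hx h0x; linarith]
        simp
      rw [hzero, mul_zero, indicator_of_notMem (by
        simp only [mem_Ioo, not_and, not_lt]
        intro _; exact hσt)]
    · push_neg at hσt
      by_cases hσ0 : 0 < σ
      · have hσm : σ ∈ Ioo (0:ℝ) t := ⟨hσ0, hσt⟩
        rw [indicator_of_mem hσm]
        have hVσ : V σ = vdot σ := indicator_of_mem (hsub1 hσm) _
        have hG : (∫ s in Ioi σ, G2 s) = ∫ s in Ioo σ t, g' s := by
          rw [hG2def, setIntegral_indicator hmIoot,
            show Ioi σ ∩ Ioo 0 t = Ioo σ t by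
              ext x
              simp only [mem_inter_iff, mem_Ioi, mem_Ioo]
              constructor
              · rintro ⟨h1, _, h3⟩; exact ⟨h1, h3⟩
              · rintro ⟨h1, h2⟩; exact ⟨h1, lt_trans hσ0 h1, h2⟩]
        rw [hVσ, hG, hkey σ hσm, neg_neg]
      · push_neg at hσ0
        have hσnm : σ ∉ Ioo (0:ℝ) T := by
          simp only [mem_Ioo, not_and, not_lt]
          intro h; linarith
        have hσnm2 : σ ∉ Ioo (0:ℝ) t := by
          simp only [mem_Ioo, not_and, not_lt]
          intro h; linarith
        have hVσ : V σ = 0 := indicator_of_notMem hσnm _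
        rw [hVσ, zero_mul, indicator_of_notMem hσnm2]
  have hright : (fun s : ℝ => G2 s * ∫ σ in Iio s, V σ) =
      (Ioo (0:ℝ) t).indicator (fun s => g' s * v s) := by
    funext s
    by_cases hs : s ∈ Ioo (0:ℝ) t
    · rw [indicator_of_mem hs]
      have hG2s : G2 s = g' s := indicator_of_mem hs _
      have hvs : (∫ σ in Iio s, V σ) = v s := by
        rw [hVdef, setIntegral_indicator hmIooT,
          show Iio s ∩ Ioo 0 T = Ioo 0 s by
            ext x
            simp only [mem_inter_iff, mem_Iio, mem_Ioo]
            constructor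
            · rintro ⟨h1, h2, _⟩; exact ⟨h2, h1⟩
            · rintro ⟨h1, h2⟩
              exact ⟨h2, h1, lt_trans h2 (lt_trans hs.2 htT)⟩,
          hv s ⟨hs.1.le, le_trans hs.2.le htT.le⟩,
          intervalIntegral.integral_of_le hs.1.le, integral_Ioc_eq_integral_Ioo]
      rw [hG2s, hvs]
    · rw [indicator_of_notMem hs]
      have hG2s : G2 s = 0 := indicator_of_notMem hs _
      rw [hG2s, zero_mul]
  have hfub : (∫ σ in Ioo (0:ℝ) t, vdot σ * -(g σ)) = ∫ s in Ioo (0:ℝ) t, g' s * v s := by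
    have h1 : (∫ σ : ℝ, ∫ s : ℝ, F (σ, s)) = ∫ σ in Ioo (0:ℝ) t, vdot σ * -(g σ) := by
      calc (∫ σ : ℝ, ∫ s : ℝ, F (σ, s)) = ∫ σ : ℝ, V σ * ∫ s in Ioi σ, G2 s := by
            simp only [hinner1]
        _ = ∫ σ : ℝ, (Ioo (0:ℝ) t).indicator (fun σ => vdot σ * -(g σ)) σ := by
            rw [hleft]
        _ = _ := MeasureTheory.integral_indicator hmIoot
    have h2 : (∫ s : ℝ, ∫ σ : ℝ, F (σ, s)) = ∫ s in Ioo (0:ℝ) t, g' s * v s := by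
      calc (∫ s : ℝ, ∫ σ : ℝ, F (σ, s)) = ∫ s : ℝ, G2 s * ∫ σ in Iio s, V σ := by
            simp only [hinner2]
        _ = ∫ s : ℝ, (Ioo (0:ℝ) t).indicator (fun s => g' s * v s) s := by
            rw [hright]
        _ = _ := MeasureTheory.integral_indicator hmIoot
    rw [← h1, ← h2, hswap]
  -- final assembly
  simp only [intervalIntegral.integral_of_le ht0.le, integral_Ioc_eq_integral_Ioo]
  have hsub := integral_sub h_lφv (h_lv.const_mul (φ t))
  have hI2 : (∫ σ in Ioo (0:ℝ) t, φ t * (l (t - σ) * vdot σ)) =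
      φ t * ∫ σ in Ioo (0:ℝ) t, l (t - σ) * vdot σ :=
    MeasureTheory.integral_const_mul _ _
  have hcong : (∫ σ in Ioo (0:ℝ) t,
      (l (t - σ) * (φ σ * vdot σ) - φ t * (l (t - σ) * vdot σ))) =
      ∫ σ in Ioo (0:ℝ) t, vdot σ * -(g σ) :=
    setIntegral_congr_fun measurableSet_Ioo (fun σ _ => by simp only [hgdef]; ring)
  have hgoal3 : (∫ σ in Ioo (0:ℝ) t,
      v σ * (-(l' (t - σ)) * (φ t - φ σ) - l (t - σ) * φ' σ)) =
      ∫ σ in Ioo (0:ℝ) t, g' σ * v σ :=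
    setIntegral_congr_fun measurableSet_Ioo (fun σ _ => by simp only [hg'def]; ring)
  linarith [hsub, hI2, hcong, hfub, hgoal3]
end

section
/- Let T > 0 and let l ∈ L₁((0,T)) ∩ C¹((0,T)) be nonnegative and nonincreasing. Let φ ∈ C¹([0,T]) be nondecreasing and let v : [0,T] → ℝ be given by v(t) = ∫₀^t v̇(σ) dσ for some v̇ ∈ L₁((0,T)), and assume v(t) ≥ 0 for all t ∈ [0,T]. Then for almost every t ∈ (0,T): ∫₀^t l(t−σ)·φ(σ)·v̇(σ) dσ ≥ φ(t)·∫₀^t l(t−σ)·v̇(σ) dσ − ∫₀^t l(t−σ)·φ̇(σ)·v(σ) dσ. -/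
open MeasureTheory Set intervalIntegral

lemma fubini_tri {b : ℝ} {g h : ℝ → ℝ} (hg : IntegrableOn g (Ioo 0 b))
    (hh : IntegrableOn h (Ioo 0 b)) :
    ∫ σ in Ioo 0 b, (∫ x in Ioo σ b, g x) * h σ = ∫ x in Ioo 0 b, g x * ∫ σ in Ioo 0 x, h σ := by
  set μ := volume.restrict (Ioo 0 b) with hμ
  set F : ℝ × ℝ → ℝ := ({q : ℝ × ℝ | q.2 < q.1}).indicator (fun q => g q.1 * h q.2) with hF
  have hint : Integrable F (μ.prod μ) :=
    (hg.mul_prod hh).indicator (measurableSet_lt measurable_snd measurable_fst)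
  have swap := integral_integral_swap (f := fun x σ => F (x, σ)) (μ := μ) (ν := μ) hint
  calc ∫ σ in Ioo 0 b, (∫ x in Ioo σ b, g x) * h σ
      = ∫ σ, (∫ x, F (x, σ) ∂μ) ∂μ := by
        rw [hμ]
        refine (setIntegral_congr_fun measurableSet_Ioo fun σ hσ => ?_).symm
        have e1 : (fun x => F (x, σ)) = fun x => (Ioi σ).indicator (fun x => g x * h σ) x := by
          funext x
          by_cases hx : σ < x <;> simp [hF, indicator, hx, mem_Ioi]
        rw [e1, MeasureTheory.setIntegral_indicator measurableSet_Ioi]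
        rw [show Ioo 0 b ∩ Ioi σ = Ioo σ b from ?_, MeasureTheory.integral_mul_const]
        ext y; simp only [mem_inter_iff, mem_Ioi, mem_Ioo]
        exact ⟨fun ⟨⟨_, h3⟩, h1⟩ => ⟨h1, h3⟩, fun ⟨h1, h3⟩ => ⟨⟨hσ.1.trans h1, h3⟩, h1⟩⟩
    _ = ∫ x, (∫ σ, F (x, σ) ∂μ) ∂μ := swap.symm
    _ = ∫ x in Ioo 0 b, g x * ∫ σ in Ioo 0 x, h σ := by
        rw [hμ]
        refine setIntegral_congr_fun measurableSet_Ioo fun x hx => ?_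
        have e1 : (fun σ => F (x, σ)) = fun σ => (Iio x).indicator (fun σ => g x * h σ) σ := by
          funext σ
          by_cases hσ : σ < x <;> simp [hF, indicator, hσ, mem_Iio]
        rw [e1, MeasureTheory.setIntegral_indicator measurableSet_Iio]
        rw [show Ioo 0 b ∩ Iio x = Ioo 0 x from ?_, MeasureTheory.integral_const_mul]
        ext y; simp only [mem_inter_iff, mem_Iio, mem_Ioo]
        exact ⟨fun ⟨⟨h2, _⟩, h1⟩ => ⟨h2, h1⟩, fun ⟨h2, h1⟩ => ⟨⟨h2, h1.trans hx.2⟩, h1⟩⟩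

lemma deriv_nonneg_of_monotoneOn' {T : ℝ} {φ : ℝ → ℝ} {u d : ℝ}
    (hφ_mono : MonotoneOn φ (Icc 0 T)) (hu : u ∈ Ioo (0:ℝ) T) (hd : HasDerivAt φ d u) :
    0 ≤ d := by
  have hslope : Filter.Tendsto (slope φ u) (nhdsWithin u (Ioi u)) (nhds d) :=
    (hasDerivAt_iff_tendsto_slope.mp hd).mono_left
      (nhdsWithin_mono u fun y hy => (ne_of_gt hy : y ≠ u))
  refine ge_of_tendsto hslope ?_
  filter_upwards [Ioo_mem_nhdsGT_of_mem ⟨le_refl u, hu.2⟩] with y hy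
  rw [slope_def_field]
  apply div_nonneg _ (by linarith [hy.1])
  have := hφ_mono (Ioo_subset_Icc_self hu) ⟨(hu.1.trans hy.1).le, hy.2.le⟩ hy.1.le
  linarith

lemma deriv_nonpos_of_antitoneOn' {T : ℝ} {l : ℝ → ℝ} {u d : ℝ}
    (hl_mono : AntitoneOn l (Ioo 0 T)) (hu : u ∈ Ioo (0:ℝ) T) (hd : HasDerivAt l d u) :
    d ≤ 0 := by
  have hslope : Filter.Tendsto (slope l u) (nhdsWithin u (Ioi u)) (nhds d) :=
    (hasDerivAt_iff_tendsto_slope.mp hd).mono_left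
      (nhdsWithin_mono u fun y hy => (ne_of_gt hy : y ≠ u))
  refine le_of_tendsto hslope ?_
  filter_upwards [Ioo_mem_nhdsGT_of_mem ⟨le_refl u, hu.2⟩] with y hy
  rw [slope_def_field]
  apply div_nonpos_of_nonpos_of_nonneg _ (by linarith [hy.1])
  have := hl_mono hu ⟨hu.1.trans hy.1, hy.2⟩ hy.1.le
  linarith

/-- Lemma 2.3, second assertion: for `l ∈ L₁((0,T)) ∩ C¹((0,T))` nonnegative and
nonincreasing, `φ ∈ C¹([0,T])` nondecreasing and `v(t) = ∫₀ᵗ v̇` nonnegative,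
for a.e. `t ∈ (0,T)` one has
`(l * (φ v̇))(t) ≥ φ(t) (l * v̇)(t) − ∫₀ᵗ l(t−σ) φ̇(σ) v(σ) dσ`. -/
theorem convolution_inequality (T : ℝ) (hT : 0 < T)
    (l l' φ φ' vdot : ℝ → ℝ) (v : ℝ → ℝ)
    (hl_int : IntegrableOn l (Ioo 0 T))
    (hl_deriv : ∀ t ∈ Ioo (0:ℝ) T, HasDerivAt l (l' t) t)
    (hl'_cont : ContinuousOn l' (Ioo 0 T))
    (hl_nonneg : ∀ t ∈ Ioo (0:ℝ) T, 0 ≤ l t)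
    (hl_mono : AntitoneOn l (Ioo 0 T))
    (hφ_deriv : ∀ t ∈ Icc (0:ℝ) T, HasDerivWithinAt φ (φ' t) (Icc 0 T) t)
    (hφ'_cont : ContinuousOn φ' (Icc 0 T))
    (hφ_mono : MonotoneOn φ (Icc 0 T))
    (hvdot : IntegrableOn vdot (Ioo 0 T))
    (hv : ∀ t ∈ Icc (0:ℝ) T, v t = ∫ σ in (0:ℝ)..t, vdot σ)
    (hv_nonneg : ∀ t ∈ Icc (0:ℝ) T, 0 ≤ v t) :
    ∀ᵐ t : ℝ, t ∈ Ioo 0 T →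
      (∫ σ in (0:ℝ)..t, l (t - σ) * (φ σ * vdot σ)) ≥
        φ t * (∫ σ in (0:ℝ)..t, l (t - σ) * vdot σ) -
          ∫ σ in (0:ℝ)..t, l (t - σ) * φ' σ * v σ := by
  have hl₀i : Integrable ((Ioo (0:ℝ) T).indicator l) :=
    (integrable_indicator_iff measurableSet_Ioo).2 hl_int
  have hw₀i : Integrable ((Ioo (0:ℝ) T).indicator vdot) :=
    (integrable_indicator_iff measurableSet_Ioo).2 hvdot
  have hae := hw₀i.ae_convolution_exists (ContinuousLinearMap.mul ℝ ℝ) hl₀i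
  filter_upwards [hae] with t hconv ht
  obtain ⟨ht0, htT⟩ := ht
  -- global facts
  have hφc : ContinuousOn φ (Icc 0 T) := fun x hx => (hφ_deriv x hx).continuousWithinAt
  have hvc : ContinuousOn v (Icc 0 T) := by
    have h1 := continuousOn_primitive (f := vdot) (a := 0) (b := T) (μ := volume)
      ((integrableOn_Icc_iff_integrableOn_Ioo).2 hvdot)
    refine h1.congr fun x hx => ?_
    rw [hv x hx, intervalIntegral.integral_of_le hx.1]
  have hφ'_nonneg : ∀ u ∈ Ioo (0:ℝ) T, 0 ≤ φ' u := fun u hu =>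
    deriv_nonneg_of_monotoneOn' hφ_mono hu
      ((hφ_deriv u (Ioo_subset_Icc_self hu)).hasDerivAt (Icc_mem_nhds hu.1 hu.2))
  have hl'_nonpos : ∀ y ∈ Ioo (0:ℝ) T, l' y ≤ 0 := fun y hy =>
    deriv_nonpos_of_antitoneOn' hl_mono hy (hl_deriv y hy)
  -- integrability of the convolution integrand at this t
  have hI1 : IntegrableOn (fun σ => l (t - σ) * vdot σ) (Ioo 0 t) := by
    have h0 : Integrable (fun σ =>
        (Ioo (0:ℝ) T).indicator vdot σ * (Ioo (0:ℝ) T).indicator l (t - σ)) := by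
      simpa using hconv.integrable
    refine h0.integrableOn.congr_fun ?_ measurableSet_Ioo
    intro σ hσ
    have h1 : σ ∈ Ioo (0:ℝ) T := ⟨hσ.1, hσ.2.trans htT⟩
    have h2 : t - σ ∈ Ioo (0:ℝ) T := ⟨by linarith [hσ.2], by linarith [hσ.1, htT]⟩
    simp [indicator_of_mem h1, indicator_of_mem h2, mul_comm]
  have hlJ : IntegrableOn (fun σ => l (t - σ)) (Ioo 0 t) := by
    have h1 : IntervalIntegrable l volume 0 t := by
      rw [intervalIntegrable_iff_integrableOn_Ioo_of_le ht0.le]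
      exact hl_int.mono_set (Ioo_subset_Ioo le_rfl htT.le)
    have h2 := (h1.comp_sub_left t).symm
    rw [sub_self, sub_zero] at h2
    rw [intervalIntegrable_iff_integrableOn_Ioo_of_le ht0.le] at h2
    exact h2
  have hIccT : Icc (0:ℝ) t ⊆ Icc 0 T := Icc_subset_Icc le_rfl htT.le
  have hmemIcc : ∀ σ ∈ Ioo (0:ℝ) t, σ ∈ Icc (0:ℝ) T := fun σ hσ =>
    ⟨hσ.1.le, (hσ.2.trans htT).le⟩
  -- interval integrals to Ioo set integrals
  have hIoo : ∀ f : ℝ → ℝ, (∫ σ in (0:ℝ)..t, f σ) = ∫ σ in Ioo 0 t, f σ := fun f => by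
    rw [intervalIntegral.integral_of_le ht0.le, MeasureTheory.integral_Ioc_eq_integral_Ioo]
  rw [ge_iff_le, hIoo, hIoo, hIoo]
  -- integrability of the three integrands
  obtain ⟨Cφ, hCφ⟩ : ∃ C, ∀ x ∈ Icc (0:ℝ) T, ‖φ x‖ ≤ C :=
    isCompact_Icc.exists_bound_of_continuousOn hφc
  have hI2 : IntegrableOn (fun σ => φ σ * (l (t - σ) * vdot σ)) (Ioo 0 t) := by
    refine hI1.bdd_mul (c := Cφ) ((hφc.mono (fun σ hσ => hIccT (Ioo_subset_Icc_self hσ))).aestronglyMeasurable measurableSet_Ioo) ?_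
    rw [ae_restrict_iff' measurableSet_Ioo]
    exact Filter.Eventually.of_forall fun σ hσ => hCφ σ (hmemIcc σ hσ)
  have hφ'vc : ContinuousOn (fun σ => φ' σ * v σ) (Icc 0 T) := hφ'_cont.mul hvc
  obtain ⟨Cw, hCw⟩ : ∃ C, ∀ x ∈ Icc (0:ℝ) T, ‖φ' x * v x‖ ≤ C :=
    isCompact_Icc.exists_bound_of_continuousOn hφ'vc
  have hI3 : IntegrableOn (fun σ => (φ' σ * v σ) * l (t - σ)) (Ioo 0 t) := by
    refine hlJ.bdd_mul (c := Cw) ((hφ'vc.mono (fun σ hσ => hIccT (Ioo_subset_Icc_self hσ))).aestronglyMeasurable measurableSet_Ioo) ?_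
    rw [ae_restrict_iff' measurableSet_Ioo]
    exact Filter.Eventually.of_forall fun σ hσ => hCw σ (hmemIcc σ hσ)
  -- W : primitive of the convolution integrand
  set W : ℝ → ℝ := fun u => ∫ σ in Ioo 0 u, l (t - σ) * vdot σ with hW
  have hWc : ContinuousOn W (Icc 0 t) := by
    have h1 := continuousOn_primitive (f := fun σ => l (t - σ) * vdot σ) (a := 0) (b := t)
      (μ := volume) ((integrableOn_Icc_iff_integrableOn_Ioo).2 hI1)
    refine h1.congr fun u hu => ?_
    rw [hW]; beta_reduce; rw [MeasureTheory.integral_Ioc_eq_integral_Ioo]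
  have hPint : IntegrableOn (fun u => φ' u * W u) (Ioo 0 t) :=
    (((hφ'_cont.mono hIccT).mul hWc).integrableOn_compact isCompact_Icc).mono_set
      Ioo_subset_Icc_self
  -- FTC for φ
  have ftcφ : ∀ σ ∈ Ioo (0:ℝ) t, φ t - φ σ = ∫ u in Ioo σ t, φ' u := by
    intro σ hσ
    have hsub : Icc σ t ⊆ Icc 0 T := Icc_subset_Icc hσ.1.le htT.le
    have h1 := intervalIntegral.integral_eq_sub_of_hasDeriv_right_of_le hσ.2.le
      (hφc.mono hsub)
      (fun x hx => ((hφ_deriv x ⟨(hσ.1.trans hx.1).le, (hx.2.trans htT).le⟩).hasDerivAt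
        (Icc_mem_nhds (hσ.1.trans hx.1) (hx.2.trans htT))).hasDerivWithinAt)
      ((hφ'_cont.mono hsub).intervalIntegrable_of_Icc hσ.2.le)
    rw [intervalIntegral.integral_of_le hσ.2.le, MeasureTheory.integral_Ioc_eq_integral_Ioo] at h1
    exact h1.symm
  -- FTC for l ∘ (t - ·)
  have ftcl : ∀ u ∈ Ioo (0:ℝ) t, ∀ σ ∈ Ioo (0:ℝ) u,
      l (t - u) - l (t - σ) = ∫ x in Ioo σ u, -l' (t - x) := by
    intro u hu σ hσ
    have hderiv : ∀ x ∈ uIcc σ u, HasDerivAt (fun y => l (t - y)) (-l' (t - x)) x := by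
      intro x hx
      rw [uIcc_of_le hσ.2.le] at hx
      have hmem : t - x ∈ Ioo (0:ℝ) T :=
        ⟨by linarith [hx.2, hu.2], by linarith [hx.1, hσ.1, htT]⟩
      have h2 := (hl_deriv (t - x) hmem).comp x ((hasDerivAt_id x).const_sub t)
      simpa [mul_comm, Function.comp_def] using h2
    have hcont : ContinuousOn (fun x => -l' (t - x)) (Icc σ u) := by
      refine (hl'_cont.comp (continuousOn_const.sub continuousOn_id) ?_).neg
      intro x hx
      simp only [mem_Ioo, id_eq, Pi.sub_apply]
      constructor <;> linarith [hx.1, hx.2, hu.2, hσ.1, htT]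
    have h1 := intervalIntegral.integral_eq_sub_of_hasDerivAt hderiv
      (hcont.intervalIntegrable_of_Icc hσ.2.le)
    rw [intervalIntegral.integral_of_le hσ.2.le, MeasureTheory.integral_Ioc_eq_integral_Ioo] at h1
    exact h1.symm
  -- key identity 1
  have key1 : φ t * (∫ σ in Ioo 0 t, l (t - σ) * vdot σ)
      - (∫ σ in Ioo 0 t, l (t - σ) * (φ σ * vdot σ)) = ∫ u in Ioo 0 t, φ' u * W u := by
    have e2 : (∫ σ in Ioo 0 t, l (t - σ) * (φ σ * vdot σ))
        = ∫ σ in Ioo 0 t, φ σ * (l (t - σ) * vdot σ) := by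
      congr 1; funext σ; ring
    rw [e2, ← MeasureTheory.integral_const_mul, ← MeasureTheory.integral_sub (hI1.const_mul _) hI2]
    have e3 : ∫ σ in Ioo 0 t, (φ t * (l (t - σ) * vdot σ) - φ σ * (l (t - σ) * vdot σ))
        = ∫ σ in Ioo 0 t, (∫ x in Ioo σ t, φ' x) * (l (t - σ) * vdot σ) := by
      refine setIntegral_congr_fun measurableSet_Ioo fun σ hσ => ?_
      rw [← ftcφ σ hσ]; ring
    rw [e3]
    exact fubini_tri ((hφ'_cont.mono hIccT).integrableOn_compact isCompact_Icc |>.mono_set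
      Ioo_subset_Icc_self) hI1
  -- key identity 2 (pointwise in u)
  have key2 : ∀ u ∈ Ioo (0:ℝ) t, l (t - u) * v u - W u
      = ∫ x in Ioo 0 u, (-l' (t - x)) * v x := by
    intro u hu
    have hvu : v u = ∫ σ in Ioo 0 u, vdot σ := by
      rw [hv u ⟨hu.1.le, ((hu.2.trans htT)).le⟩, intervalIntegral.integral_of_le hu.1.le,
        MeasureTheory.integral_Ioc_eq_integral_Ioo]
    have hvdotu : IntegrableOn vdot (Ioo 0 u) :=
      hvdot.mono_set (Ioo_subset_Ioo le_rfl (hu.2.trans htT).le)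
    have e1 : l (t - u) * v u = ∫ σ in Ioo 0 u, l (t - u) * vdot σ := by
      rw [hvu, MeasureTheory.integral_const_mul]
    rw [hW, e1, ← MeasureTheory.integral_sub (hvdotu.const_mul _)
      (hI1.mono_set (Ioo_subset_Ioo le_rfl hu.2.le))]
    have e3 : ∫ σ in Ioo 0 u, (l (t - u) * vdot σ - l (t - σ) * vdot σ)
        = ∫ σ in Ioo 0 u, (∫ x in Ioo σ u, -l' (t - x)) * vdot σ := by
      refine setIntegral_congr_fun measurableSet_Ioo fun σ hσ => ?_
      rw [← ftcl u hu σ hσ]; ring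
    rw [e3]
    have hgint : IntegrableOn (fun x => -l' (t - x)) (Ioo 0 u) := by
      have hcont : ContinuousOn (fun x => -l' (t - x)) (Icc 0 u) := by
        refine (hl'_cont.comp (continuousOn_const.sub continuousOn_id) ?_).neg
        intro x hx
        simp only [mem_Ioo, id_eq, Pi.sub_apply]
        constructor <;> linarith [hx.1, hx.2, hu.2, htT]
      exact (hcont.integrableOn_compact isCompact_Icc).mono_set Ioo_subset_Icc_self
    have h4 := fubini_tri hgint hvdotu
    rw [h4]
    refine setIntegral_congr_fun measurableSet_Ioo fun x hx => ?_
    congr 1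
    rw [hv x ⟨hx.1.le, by linarith [hx.2, hu.2, htT]⟩, intervalIntegral.integral_of_le hx.1.le,
      MeasureTheory.integral_Ioc_eq_integral_Ioo]
  -- positivity
  have keypos : 0 ≤ ∫ u in Ioo 0 t, φ' u * (l (t - u) * v u - W u) := by
    refine setIntegral_nonneg measurableSet_Ioo fun u hu => ?_
    refine mul_nonneg (hφ'_nonneg u ⟨hu.1, hu.2.trans htT⟩) ?_
    rw [key2 u hu]
    refine setIntegral_nonneg measurableSet_Ioo fun x hx => ?_
    refine mul_nonneg ?_ (hv_nonneg x ⟨hx.1.le, by linarith [hx.2, hu.2, htT]⟩)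
    have : l' (t - x) ≤ 0 := hl'_nonpos (t - x) ⟨by linarith [hx.2, hu.2], by linarith [hx.1, htT]⟩
    linarith
  -- assemble
  have hQ : IntegrableOn (fun u => φ' u * (l (t - u) * v u)) (Ioo 0 t) := by
    refine hI3.congr_fun ?_ measurableSet_Ioo
    intro u _; ring
  have split : ∫ u in Ioo 0 t, φ' u * (l (t - u) * v u - W u)
      = (∫ u in Ioo 0 t, φ' u * (l (t - u) * v u)) - ∫ u in Ioo 0 t, φ' u * W u := by
    rw [← MeasureTheory.integral_sub hQ hPint]
    congr 1; funext u; ring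
  have hCQ : (∫ σ in Ioo 0 t, l (t - σ) * φ' σ * v σ)
      = ∫ u in Ioo 0 t, φ' u * (l (t - u) * v u) := by
    congr 1; funext u; ring
  rw [hCQ]
  linarith [keypos, key1, split]
end

section
/- Let T > 0, let k : [0,T] → ℝ be absolutely continuous, i.e. k(t) = k(0) + ∫₀^t k̇(s) ds with k̇ ∈ L₁((0,T)), let v ∈ L₁((0,T)) and φ ∈ C¹([0,T]). Then for almost every t ∈ (0,T) the functions k*v and k*(φ·v) are differentiable at t and φ(t)·(d/dt)(k*v)(t) = (d/dt)(k*[φ·v])(t) + ∫₀^t k̇(t−τ)·(φ(t)−φ(τ))·v(τ) dτ. -/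
open MeasureTheory Set intervalIntegral Filter Metric Topology

lemma hasDerivAt_of_avg (g : ℝ → ℝ) (hg : Integrable g) (t : ℝ)
    (key : Tendsto (fun h : ℝ => ⨍ y in closedBall t |h|, ‖g y - g t‖) (𝓝[≠] 0) (𝓝 0)) :
    HasDerivAt (fun τ => ∫ s in (0:ℝ)..τ, g s) (g t) t := by
  rw [hasDerivAt_iff_tendsto]
  set B : ℝ → ℝ := fun x' => 2 * ⨍ y in closedBall t |x' - t|, ‖g y - g t‖ with hB
  have hBt : B t = 0 := by
    simp [hB, average, MeasureTheory.integral_smul_measure]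
  have hBtend : Tendsto B (𝓝 t) (𝓝 0) := by
    rw [← nhdsNE_sup_pure t, tendsto_sup]
    constructor
    · have hsub : Tendsto (fun x' : ℝ => x' - t) (𝓝[≠] t) (𝓝[≠] 0) := by
        rw [tendsto_nhdsWithin_iff]
        constructor
        · have h0 : Tendsto (fun x' : ℝ => x' - t) (𝓝 t) (𝓝 (t - t)) :=
            (continuous_id.sub continuous_const).tendsto t
          rw [sub_self] at h0
          exact h0.mono_left nhdsWithin_le_nhds
        filter_upwards [self_mem_nhdsWithin] with x hx
        simpa [sub_eq_zero] using hx
      have := (key.comp hsub).const_mul (2:ℝ)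
      simpa [hB, Function.comp] using this
    · rw [tendsto_pure_left]
      intro s hs
      rw [hBt]; exact mem_of_mem_nhds hs
  apply squeeze_zero' (Eventually.of_forall fun x' => by positivity)
    (Eventually.of_forall ?_) hBtend
  intro x'
  rcases eq_or_ne x' t with rfl | hne
  · simp [hBt]
  · set r := |x' - t| with hr
    have hrpos : 0 < r := abs_pos.mpr (sub_ne_zero.mpr hne)
    have hint1 : IntervalIntegrable g volume 0 x' := hg.intervalIntegrable
    have hint2 : IntervalIntegrable g volume 0 t := hg.intervalIntegrable
    have hFF : (∫ s in (0:ℝ)..x', g s) - ∫ s in (0:ℝ)..t, g s = ∫ s in t..x', g s :=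
      integral_interval_sub_left hint1 hint2
    have hconst : (x' - t) • g t = ∫ _ in t..x', g t := by
      rw [intervalIntegral.integral_const]
    have heq : (∫ s in (0:ℝ)..x', g s) - (∫ s in (0:ℝ)..t, g s) - (x' - t) • g t
        = ∫ s in t..x', (g s - g t) := by
      rw [hFF, hconst, ← intervalIntegral.integral_sub hg.intervalIntegrable
        intervalIntegrable_const]
    have hsubset : Set.uIoc t x' ⊆ closedBall t r := by
      intro y hy
      rw [mem_closedBall, Real.dist_eq, hr]
      rcases le_total t x' with h | h
      · rw [uIoc_of_le h] at hy
        rw [abs_of_nonneg (by linarith [hy.1])]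
        exact le_trans (by linarith [hy.2]) (le_abs_self _)
      · rw [uIoc_of_ge h] at hy
        rw [abs_of_nonpos (by linarith [hy.2])]
        exact le_trans (by linarith [hy.1]) (neg_le_abs _)
    have hintcb : IntegrableOn (fun y => ‖g y - g t‖) (closedBall t r) := by
      exact ((hg.integrableOn.sub (integrableOn_const
        (measure_closedBall_lt_top).ne)).norm)
    have h1 : ‖∫ s in t..x', (g s - g t)‖ ≤ ∫ y in closedBall t r, ‖g y - g t‖ := by
      refine le_trans (intervalIntegral.norm_integral_le_integral_norm_uIoc) ?_
      exact setIntegral_mono_set hintcb (Eventually.of_forall fun y => norm_nonneg _)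
        (HasSubset.Subset.eventuallyLE hsubset)
    have h2 : ∫ y in closedBall t r, ‖g y - g t‖ = (2 * r) * ⨍ y in closedBall t r, ‖g y - g t‖ := by
      rw [setAverage_eq, smul_eq_mul, Real.volume_real_closedBall hrpos.le]
      field_simp
    calc ‖x' - t‖⁻¹ * ‖(∫ s in (0:ℝ)..x', g s) - (∫ s in (0:ℝ)..t, g s) - (x' - t) • g t‖
        ≤ r⁻¹ * ((2 * r) * ⨍ y in closedBall t r, ‖g y - g t‖) := by
          rw [heq, Real.norm_eq_abs, ← hr]
          exact mul_le_mul_of_nonneg_left (h2 ▸ h1) (by positivity)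
      _ = B x' := by
          rw [hB]
          field_simp
          ring

lemma ae_hasDerivAt_integral (g : ℝ → ℝ) (hg : Integrable g) :
    ∀ᵐ t : ℝ, HasDerivAt (fun τ => ∫ s in (0:ℝ)..τ, g s) (g t) t := by
  filter_upwards [IsUnifLocDoublingMeasure.ae_tendsto_average_norm_sub
    (μ := volume) (hg.locallyIntegrable) 1] with t ht
  have habs : Tendsto (fun h : ℝ => |h|) (𝓝[≠] 0) (𝓝[>] 0) := by
    rw [tendsto_nhdsWithin_iff]
    constructor
    · exact (continuous_abs.tendsto 0).mono_left nhdsWithin_le_nhds |>.congr' (by simp)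
        |>.mono_right (le_of_eq (by simp))
    · filter_upwards [self_mem_nhdsWithin] with h hh
      exact abs_pos.mpr hh
  have hmem : ∀ᶠ h : ℝ in 𝓝[≠] 0, t ∈ closedBall t (1 * |h|) := by
    filter_upwards with h
    simpa using mul_nonneg zero_le_one (abs_nonneg h)
  have key : Tendsto (fun h : ℝ => ⨍ y in closedBall t |h|, ‖g y - g t‖) (𝓝[≠] 0) (𝓝 0) :=
    ht (fun _ => t) (fun h => |h|) habs hmem
  exact hasDerivAt_of_avg g hg t key

lemma iocCongr {F G : ℝ → ℝ} {a b : ℝ} (h : ∀ x ∈ Ioo a b, F x = G x) :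
    ∫ x in Ioc a b, F x = ∫ x in Ioc a b, G x := by
  rw [← Measure.restrict_congr_set Ioo_ae_eq_Ioc]
  exact setIntegral_congr_fun measurableSet_Ioo h

lemma conv_repr (T : ℝ) (hT : 0 < T) (k kdot u : ℝ → ℝ)
    (hkdot : IntegrableOn kdot (Ioo 0 T))
    (hk : ∀ t ∈ Icc (0:ℝ) T, k t = k 0 + ∫ s in (0:ℝ)..t, kdot s)
    (hu : IntegrableOn u (Ioo 0 T)) :
    ∃ g uext : ℝ → ℝ, Integrable g ∧ Integrable uext ∧
      (∀ᵐ t : ℝ, t ∈ Ioo 0 T →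
        IntegrableOn (fun s => kdot (t - s) * u s) (Ioc 0 t) ∧ uext t = u t) ∧
      (∀ t ∈ Ioo 0 T, g t = ∫ s in (0:ℝ)..t, kdot (t - s) * u s) ∧
      (∀ t ∈ Ioo 0 T, (∫ s in (0:ℝ)..t, k (t - s) * u s)
          = k 0 * (∫ s in (0:ℝ)..t, uext s) + ∫ σ in (0:ℝ)..t, g σ) := by
  have hKsm := hkdot.aestronglyMeasurable.stronglyMeasurable_mk
  have hUsm := hu.aestronglyMeasurable.stronglyMeasurable_mk
  set K : ℝ → ℝ := (Ioo 0 T).indicator (hkdot.aestronglyMeasurable.mk kdot) with hKdef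
  set U : ℝ → ℝ := (Ioo 0 T).indicator (hu.aestronglyMeasurable.mk u) with hUdef
  have hKm : Measurable K := (hKsm.measurable).indicator measurableSet_Ioo
  have hUm : Measurable U := (hUsm.measurable).indicator measurableSet_Ioo
  have hKz : ∀ x, x ∉ Ioo 0 T → K x = 0 := fun x hx => indicator_of_notMem hx _
  have hUz : ∀ x, x ∉ Ioo 0 T → U x = 0 := fun x hx => indicator_of_notMem hx _
  have hKae : ∀ᵐ x : ℝ, x ∈ Ioo 0 T → kdot x = K x := by
    have h1 := (ae_restrict_iff' measurableSet_Ioo).mp hkdot.aestronglyMeasurable.ae_eq_mk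
    filter_upwards [h1] with x hx hmem
    rw [hx hmem, hKdef, indicator_of_mem hmem]
  have hUae : ∀ᵐ x : ℝ, x ∈ Ioo 0 T → u x = U x := by
    have h1 := (ae_restrict_iff' measurableSet_Ioo).mp hu.aestronglyMeasurable.ae_eq_mk
    filter_upwards [h1] with x hx hmem
    rw [hx hmem, hUdef, indicator_of_mem hmem]
  have hKint : Integrable K := by
    refine IntegrableOn.integrable_indicator ?_ measurableSet_Ioo
    exact hkdot.congr hkdot.aestronglyMeasurable.ae_eq_mk
  have hUint : Integrable U := by
    refine IntegrableOn.integrable_indicator ?_ measurableSet_Ioo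
    exact hu.congr hu.aestronglyMeasurable.ae_eq_mk
  -- the kernel on the product space
  set f : ℝ × ℝ → ℝ := fun p =>
    ((Ioo 0 T) ×ˢ (univ : Set ℝ)).indicator (fun q => K (q.1 - q.2)) p * U p.2 with hfdef
  have hfm : Measurable f := by
    apply Measurable.mul
    · exact ((hKm.comp (measurable_fst.sub measurable_snd)).indicator
        (measurableSet_Ioo.prod MeasurableSet.univ))
    · exact hUm.comp measurable_snd
  have hfe : ∀ σ, σ ∈ Ioo 0 T → ∀ s, f (σ, s) = K (σ - s) * U s := by
    intro σ hσ s
    simp only [hfdef, indicator_of_mem (show (σ, s) ∈ (Ioo 0 T) ×ˢ (univ : Set ℝ) from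
      ⟨hσ, mem_univ s⟩)]
  have hfz : ∀ σ s, s ≥ σ → f (σ, s) = 0 := by
    intro σ s hs
    have h0 : K (σ - s) = 0 := hKz _ (fun h => absurd h.1 (by simp; linarith))
    by_cases hmem : (σ, s) ∈ (Ioo 0 T) ×ˢ (univ : Set ℝ)
    · simp [hfdef, indicator_of_mem hmem, h0]
    · simp [hfdef, indicator_of_notMem hmem]
  have hsec : ∀ s : ℝ, Integrable (fun σ => f (σ, s)) := by
    intro s
    have h1 : Integrable (fun σ : ℝ => K (σ - s)) := hKint.comp_sub_right s
    have h2 := (h1.indicator (s := Ioo 0 T) measurableSet_Ioo).mul_const (U s)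
    refine h2.congr (Eventually.of_forall fun σ => ?_)
    by_cases h : σ ∈ Ioo 0 T
    · simp [hfdef, indicator_of_mem h, indicator_of_mem (show (σ, s) ∈ _ ×ˢ _ from ⟨h, mem_univ s⟩)]
    · simp [hfdef, indicator_of_notMem h,
        indicator_of_notMem (show (σ, s) ∉ (Ioo 0 T) ×ˢ (univ : Set ℝ) from fun hc => h hc.1)]
  have hfint : Integrable f (volume.prod volume) := by
    refine (integrable_prod_iff' hfm.aestronglyMeasurable).mpr
      ⟨Eventually.of_forall hsec, ?_⟩
    have hKn : Integrable (fun x => ‖K x‖) := hKint.norm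
    refine Integrable.mono' ((hUint.norm.const_mul (∫ x, ‖K x‖)))
      ((hfm.norm.stronglyMeasurable.integral_prod_left').aestronglyMeasurable)
      (Eventually.of_forall fun s => ?_)
    have hnn : 0 ≤ ∫ σ, ‖f (σ, s)‖ := integral_nonneg fun σ => norm_nonneg _
    rw [Real.norm_eq_abs, abs_of_nonneg hnn]
    have hle : ∀ σ, ‖f (σ, s)‖ ≤ ‖K (σ - s)‖ * ‖U s‖ := by
      intro σ
      by_cases h : (σ, s) ∈ (Ioo 0 T) ×ˢ (univ : Set ℝ)
      · rw [hfdef]; simp only [indicator_of_mem h, norm_mul]; exact le_refl _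
      · simp only [hfdef, indicator_of_notMem h, zero_mul, norm_zero]
        positivity
    calc ∫ σ, ‖f (σ, s)‖ ≤ ∫ σ, ‖K (σ - s)‖ * ‖U s‖ := by
          refine integral_mono_of_nonneg (Eventually.of_forall fun σ => norm_nonneg _)
            ?_ (Eventually.of_forall hle)
          exact (hKn.comp_sub_right s).mul_const _
      _ = (∫ σ, ‖K (σ - s)‖) * ‖U s‖ := integral_mul_const _ _
      _ = (∫ x, ‖K x‖) * ‖U s‖ := by rw [integral_sub_right_eq_self (fun x => ‖K x‖) s]
  set g : ℝ → ℝ := fun σ => ∫ s, f (σ, s) with hgdef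
  have hgint : Integrable g := hfint.integral_prod_left
  -- pointwise identification of g on Ioo 0 T
  have hgIoc : ∀ t ∈ Ioo 0 T, g t = ∫ s in Ioc 0 t, K (t - s) * U s := by
    intro t ht
    have h0 : ∀ s, s ∉ Ioc 0 t → K (t - s) * U s = 0 := by
      intro s hs
      rcases not_and_or.mp hs with h | h
      · rw [hUz s (fun hc => h hc.1), mul_zero]
      · push_neg at h
        rw [hKz (t - s) (fun hc => by simp at hc; linarith [hc.1]), zero_mul]
    have h0' : ∀ s, s ∉ Ioc 0 t → f (t, s) = 0 := by
      intro s hs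
      rcases not_and_or.mp hs with h | h
      · show (_ : ℝ) * U s = 0
        rw [hUz s (fun hc => h hc.1), mul_zero]
      · push_neg at h
        exact hfz t s h.le
    calc g t = ∫ s, f (t, s) := rfl
      _ = ∫ s in Ioc 0 t, f (t, s) :=
          (setIntegral_eq_integral_of_forall_compl_eq_zero h0').symm
      _ = ∫ s in Ioc 0 t, K (t - s) * U s :=
          setIntegral_congr_fun measurableSet_Ioc (fun s _ => hfe t ht s)
  have hne : ∀ t : ℝ, ∀ᵐ s : ℝ, s ≠ t := by
    intro t
    rw [ae_iff]
    simpa [not_not] using measure_singleton t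
  have hcongr : ∀ t ∈ Ioo 0 T, (fun s => K (t - s) * U s)
      =ᵐ[volume.restrict (Ioc 0 t)] fun s => kdot (t - s) * u s := by
    intro t ht
    have hback : ∀ᵐ s : ℝ, t - s ∈ Ioo 0 T → kdot (t - s) = K (t - s) :=
      (Measure.measurePreserving_sub_left volume t).quasiMeasurePreserving.tendsto_ae.eventually
        hKae
    filter_upwards [ae_restrict_of_ae (hback.and (hUae.and (hne t))),
      ae_restrict_mem measurableSet_Ioc] with s hs hmem
    obtain ⟨h1, h2, h3⟩ := hs
    have hsT : s ∈ Ioo 0 T := ⟨hmem.1, lt_of_le_of_lt hmem.2 ht.2⟩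
    have hts : t - s ∈ Ioo 0 T :=
      ⟨sub_pos.mpr (lt_of_le_of_ne hmem.2 h3), by
        have := hmem.1; have := ht.2; linarith⟩
    rw [← h1 hts, ← h2 hsT]
  refine ⟨g, U, hgint, hUint, ?_, ?_, ?_⟩
  · filter_upwards [hfint.prod_right_ae, hUae] with t hft hU'
    intro ht
    refine ⟨?_, (hU' ht).symm⟩
    have h2 : Integrable (fun s => K (t - s) * U s) :=
      hft.congr (Eventually.of_forall fun s => hfe t ht s)
    exact (h2.integrableOn).congr (hcongr t ht)
  · intro t ht
    rw [hgIoc t ht, integral_of_le ht.1.le]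
    exact integral_congr_ae (hcongr t ht)
  · intro t ht
    obtain ⟨ht0, htT⟩ := ht
    have h0t : (0:ℝ) ≤ t := ht0.le
    set A : ℝ → ℝ := fun s => ∫ r in (0:ℝ)..(t - s), K r with hAdef
    have hAcont : Continuous A :=
      (intervalIntegral.continuous_primitive (fun a b => hKint.intervalIntegrable) 0).comp
        (continuous_const.sub continuous_id)
    have hAbd : ∃ C, ∀ s, ‖A s‖ ≤ C := by
      refine ⟨∫ x, ‖K x‖, fun s => ?_⟩
      refine le_trans intervalIntegral.norm_integral_le_integral_norm_uIoc ?_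
      exact setIntegral_le_integral hKint.norm (Eventually.of_forall fun x => norm_nonneg _)
    have step1 : (∫ s in (0:ℝ)..t, k (t - s) * u s)
        = ∫ s in (0:ℝ)..t, (k 0 + A s) * u s := by
      apply intervalIntegral.integral_congr
      intro s hs
      rw [uIcc_of_le h0t] at hs
      show k (t - s) * u s = (k 0 + A s) * u s
      have h1 : t - s ∈ Icc (0:ℝ) T := ⟨by linarith [hs.2], by linarith [hs.1]⟩
      rw [hk _ h1]
      have h2 : (∫ r in (0:ℝ)..(t - s), kdot r) = A s := by
        apply intervalIntegral.integral_congr_ae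
        filter_upwards [hKae] with r hr hmem
        apply hr
        rw [uIoc_of_le h1.1] at hmem
        exact ⟨hmem.1, by linarith [hmem.2, hs.1]⟩
      rw [h2]
    rw [step1]
    simp only [integral_of_le h0t]
    have step2 : ∫ s in Ioc 0 t, (k 0 + A s) * u s = ∫ s in Ioc 0 t, (k 0 + A s) * U s := by
      apply setIntegral_congr_ae measurableSet_Ioc
      filter_upwards [hUae] with s hs hmem
      rw [hs ⟨hmem.1, lt_of_le_of_lt hmem.2 htT⟩]
    rw [step2]
    have hUIoc : IntegrableOn U (Ioc 0 t) := hUint.integrableOn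
    have hAU : IntegrableOn (fun s => A s * U s) (Ioc 0 t) :=
      (hUint.bdd_mul hAcont.aestronglyMeasurable (Eventually.of_forall hAbd.choose_spec)).integrableOn
    have step3 : ∫ s in Ioc 0 t, (k 0 + A s) * U s
        = k 0 * (∫ s in Ioc 0 t, U s) + ∫ s in Ioc 0 t, A s * U s := by
      have hring : ∀ s, (k 0 + A s) * U s = k 0 * U s + A s * U s := fun s => by ring
      simp_rw [hring]
      rw [integral_add (hUIoc.const_mul _) hAU, MeasureTheory.integral_const_mul]
    rw [step3]
    congr 1
    have step4 : ∫ s in Ioc 0 t, A s * U s = ∫ s in Ioc 0 t, ∫ σ in Ioc 0 t, f (σ, s) := by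
      apply iocCongr
      intro s hs
      have ha : A s = ∫ σ in s..t, K (σ - s) := by
        have h := intervalIntegral.integral_comp_sub_right (a := s) (b := t) (fun x => K x) s
        rw [sub_self] at h
        exact h.symm
      rw [ha, integral_of_le hs.2.le, ← MeasureTheory.integral_mul_const]
      have hint : Integrable (fun σ => K (σ - s) * U s) := (hKint.comp_sub_right s).mul_const _
      have hsplit : Ioc (0:ℝ) s ∪ Ioc s t = Ioc 0 t := Ioc_union_Ioc_eq_Ioc hs.1.le hs.2.le
      have h5 : ∫ σ in Ioc 0 t, K (σ - s) * U s = ∫ σ in Ioc s t, K (σ - s) * U s := by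
        rw [← hsplit, setIntegral_union (Ioc_disjoint_Ioc_of_le le_rfl) measurableSet_Ioc
          hint.integrableOn hint.integrableOn]
        have hz : ∫ σ in Ioc 0 s, K (σ - s) * U s = 0 := by
          rw [setIntegral_congr_fun measurableSet_Ioc (g := fun _ => (0:ℝ))
            (fun σ hσ => by rw [hKz (σ - s) (fun hc => by simp at hc; linarith [hσ.2, hc.1]),
              zero_mul]), MeasureTheory.integral_zero]
        rw [hz, zero_add]
      rw [← h5]
      apply iocCongr
      intro σ hσ
      exact (hfe σ ⟨hσ.1, hσ.2.trans htT⟩ s).symm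
    rw [step4]
    have step5 : ∫ s in Ioc 0 t, ∫ σ in Ioc 0 t, f (σ, s)
        = ∫ σ in Ioc 0 t, ∫ s in Ioc 0 t, f (σ, s) := by
      have hi : Integrable (Function.uncurry fun σ s => f (σ, s))
          ((volume.restrict (Ioc 0 t)).prod (volume.restrict (Ioc 0 t))) := by
        rw [Measure.prod_restrict]
        exact hfint.integrableOn
      exact (integral_integral_swap hi).symm
    rw [step5]
    apply setIntegral_congr_fun measurableSet_Ioc
    intro σ hσ
    apply setIntegral_eq_integral_of_forall_compl_eq_zero
    intro s hs
    rcases not_and_or.mp hs with h | h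
    · show (_ : ℝ) * U s = 0
      rw [hUz s (fun hc => h hc.1), mul_zero]
    · push_neg at h
      exact hfz σ s (le_trans hσ.2 h.le)

/-- Lemma 2.4: for `k ∈ H¹₁([0,T])` (absolutely continuous with derivative
`k̇ ∈ L₁`), `v ∈ L₁((0,T))` and `φ ∈ C¹([0,T])`, for a.e. `t ∈ (0,T)` the
convolutions `k*v` and `k*(φ v)` are differentiable at `t` and
`φ(t) (d/dt)(k*v)(t) = (d/dt)(k*(φ v))(t) + ∫₀ᵗ k̇(t−τ)(φ(t)−φ(τ)) v(τ) dτ`. -/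
theorem product_rule_convolution (T : ℝ) (hT : 0 < T)
    (k kdot v φ φ' : ℝ → ℝ)
    (hkdot : IntegrableOn kdot (Ioo 0 T))
    (hk : ∀ t ∈ Icc (0:ℝ) T, k t = k 0 + ∫ s in (0:ℝ)..t, kdot s)
    (hv : IntegrableOn v (Ioo 0 T))
    (hφ_deriv : ∀ t ∈ Icc (0:ℝ) T, HasDerivWithinAt φ (φ' t) (Icc 0 T) t)
    (hφ'_cont : ContinuousOn φ' (Icc 0 T)) :
    ∀ᵐ t : ℝ, t ∈ Ioo 0 T →
      ∃ d₁ d₂ : ℝ,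
        HasDerivAt (fun τ => ∫ s in (0:ℝ)..τ, k (τ - s) * v s) d₁ t ∧
        HasDerivAt (fun τ => ∫ s in (0:ℝ)..τ, k (τ - s) * (φ s * v s)) d₂ t ∧
        φ t * d₁ = d₂ + ∫ s in (0:ℝ)..t, kdot (t - s) * (φ t - φ s) * v s := by
  have hφc : ContinuousOn φ (Icc 0 T) := fun t ht => (hφ_deriv t ht).continuousWithinAt
  obtain ⟨C, hC⟩ := isCompact_Icc.exists_bound_of_continuousOn hφc
  have hw : IntegrableOn (fun s => φ s * v s) (Ioo 0 T) := by
    refine Integrable.mono' (hv.norm.const_mul C) ?_ ?_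
    · exact ((hφc.mono Ioo_subset_Icc_self).aestronglyMeasurable measurableSet_Ioo).mul
        hv.aestronglyMeasurable
    · filter_upwards [ae_restrict_mem measurableSet_Ioo] with s hs
      rw [norm_mul]
      exact mul_le_mul_of_nonneg_right (hC s (Ioo_subset_Icc_self hs)) (norm_nonneg _)
  obtain ⟨g₁, vext, hg₁, hvext, hae₁, hchar₁, hrep₁⟩ := conv_repr T hT k kdot v hkdot hk hv
  obtain ⟨g₂, wext, hg₂, hwext, hae₂, hchar₂, hrep₂⟩ :=
    conv_repr T hT k kdot (fun s => φ s * v s) hkdot hk hw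
  have hD₁ := ae_hasDerivAt_integral _ ((hvext.const_mul (k 0)).add hg₁)
  have hD₂ := ae_hasDerivAt_integral _ ((hwext.const_mul (k 0)).add hg₂)
  filter_upwards [hD₁, hD₂, hae₁, hae₂] with t hd₁ hd₂ ha₁ ha₂
  intro ht
  obtain ⟨hI₁, hv₁⟩ := ha₁ ht
  obtain ⟨hI₂, hw₂⟩ := ha₂ ht
  refine ⟨k 0 * vext t + g₁ t, k 0 * wext t + g₂ t, ?_, ?_, ?_⟩
  · refine hd₁.congr_of_eventuallyEq ?_
    filter_upwards [Ioo_mem_nhds ht.1 ht.2] with τ hτ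
    show (∫ s in (0:ℝ)..τ, k (τ - s) * v s) = ∫ s in (0:ℝ)..τ, (k 0 * vext s + g₁ s)
    rw [hrep₁ τ hτ, intervalIntegral.integral_add
      ((hvext.const_mul (k 0)).intervalIntegrable) hg₁.intervalIntegrable,
      intervalIntegral.integral_const_mul]
  · refine hd₂.congr_of_eventuallyEq ?_
    filter_upwards [Ioo_mem_nhds ht.1 ht.2] with τ hτ
    show (∫ s in (0:ℝ)..τ, k (τ - s) * (φ s * v s)) = ∫ s in (0:ℝ)..τ, (k 0 * wext s + g₂ s)
    rw [hrep₂ τ hτ, intervalIntegral.integral_add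
      ((hwext.const_mul (k 0)).intervalIntegrable) hg₂.intervalIntegrable,
      intervalIntegral.integral_const_mul]
  · have hIv : IntervalIntegrable (fun s => kdot (t - s) * v s) volume 0 t := by
      rw [intervalIntegrable_iff, uIoc_of_le ht.1.le]; exact hI₁
    have hIw : IntervalIntegrable (fun s => kdot (t - s) * (φ s * v s)) volume 0 t := by
      rw [intervalIntegrable_iff, uIoc_of_le ht.1.le]; exact hI₂
    have hsplit : (∫ s in (0:ℝ)..t, kdot (t - s) * (φ t - φ s) * v s)
        = φ t * (∫ s in (0:ℝ)..t, kdot (t - s) * v s)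
          - ∫ s in (0:ℝ)..t, kdot (t - s) * (φ s * v s) := by
      rw [← intervalIntegral.integral_const_mul,
        ← intervalIntegral.integral_sub (hIv.const_mul _) hIw]
      apply intervalIntegral.integral_congr
      intro s _
      show kdot (t - s) * (φ t - φ s) * v s
        = φ t * (kdot (t - s) * v s) - kdot (t - s) * (φ s * v s)
      ring
    rw [hv₁, hw₂, hchar₁ t ht, hchar₂ t ht, hsplit]
    ring
end

section
/- Assume (K0) and (K1), with p₀ > 1, t₀ > 0 and c̄ > 1 the constants from (K1). Then ∫₀^t k(s) ds ≤ c̄ · t · k₁(t) for all t ∈ (0, t₀), where k₁(t) = ( ∫₀^t l(s) ds )^{−1}. -/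
open MeasureTheory Set intervalIntegral

/-- Lemma 2.5, second assertion: under (K0) and (K1) (with constants `p₀, t₀, c̄`),
`(1 * k)(t) = ∫₀ᵗ k ≤ c̄ t k₁(t)` for all `t ∈ (0, t₀)`, where `k₁(t) = (∫₀ᵗ l)⁻¹`. -/
theorem one_conv_k_le (k l : ℝ → ℝ) (p₀ t₀ cbar : ℝ)
    -- (K0)
    (hk_int : ∀ S : ℝ, 0 < S → IntegrableOn k (Ioc 0 S))
    (hl_int : ∀ S : ℝ, 0 < S → IntegrableOn l (Ioc 0 S))
    (hk_C1 : ContDiffOn ℝ 1 k (Ioi 0))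
    (hl_C1 : ContDiffOn ℝ 1 l (Ioi 0))
    (hk_nonneg : ∀ t : ℝ, 0 < t → 0 ≤ k t)
    (hl_nonneg : ∀ t : ℝ, 0 < t → 0 ≤ l t)
    (hk_anti : AntitoneOn k (Ioi 0))
    (hl_anti : AntitoneOn l (Ioi 0))
    (hk_conv : ConvexOn ℝ (Ioi 0) k)
    (hkl : ∀ t : ℝ, 0 < t → ∫ s in (0:ℝ)..t, k (t - s) * l s = 1)
    -- (K1)
    (hp₀ : 1 < p₀) (ht₀ : 0 < t₀) (hcbar : 1 < cbar)
    (hl_p : IntegrableOn (fun s => l s ^ p₀) (Ioo 0 t₀))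
    (hK1 : ∀ t : ℝ, 0 < t → t ≤ t₀ →
      (1 / t) * ∫ s in (0:ℝ)..t, l s ^ p₀ ≤ cbar * l t ^ p₀) :
    ∀ t : ℝ, 0 < t → t < t₀ →
      (∫ s in (0:ℝ)..t, k s) ≤ cbar * t * (∫ s in (0:ℝ)..t, l s)⁻¹ := by
  intro t ht ht'
  have hle : (0:ℝ) ≤ t := ht.le
  -- basic integrability
  have hIk : IntervalIntegrable k volume 0 t :=
    (intervalIntegrable_iff_integrableOn_Ioc_of_le hle).2 (hk_int t ht)
  have hIl : IntervalIntegrable l volume 0 t :=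
    (intervalIntegrable_iff_integrableOn_Ioc_of_le hle).2 (hl_int t ht)
  have hIkt : IntervalIntegrable (fun s => k (t - s)) volume 0 t := by
    have h := (hIk.comp_sub_left t).symm
    simpa using h
  have hIktO : IntegrableOn (fun s => k (t - s)) (Ioo 0 t) volume :=
    ((intervalIntegrable_iff_integrableOn_Ioc_of_le hle).1 hIkt).mono_set Ioo_subset_Ioc_self
  have hIf : IntervalIntegrable (fun s => k (t - s) * l s) volume 0 t := by
    by_contra h
    have h0 := intervalIntegral.integral_undef h
    rw [hkl t ht] at h0
    norm_num at h0
  have hIfO : IntegrableOn (fun s => k (t - s) * l s) (Ioo 0 t) volume :=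
    ((intervalIntegrable_iff_integrableOn_Ioc_of_le hle).1 hIf).mono_set Ioo_subset_Ioc_self
  have hIlO : IntegrableOn l (Ioo 0 t) volume :=
    (hl_int t ht).mono_set Ioo_subset_Ioc_self
  have hIlp : IntegrableOn (fun s => l s ^ p₀) (Ioo 0 t) volume :=
    hl_p.mono_set (fun x hx => ⟨hx.1, hx.2.trans ht'⟩)
  have hmeasIoo : MeasurableSet (Ioo (0:ℝ) t) := measurableSet_Ioo
  -- conversion of interval integrals to Ioo set integrals
  have convk : (∫ s in (0:ℝ)..t, k s) = ∫ s in Ioo 0 t, k s := by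
    rw [intervalIntegral.integral_of_le hle, MeasureTheory.integral_Ioc_eq_integral_Ioo]
  have convl : (∫ s in (0:ℝ)..t, l s) = ∫ s in Ioo 0 t, l s := by
    rw [intervalIntegral.integral_of_le hle, MeasureTheory.integral_Ioc_eq_integral_Ioo]
  have convlp : (∫ s in (0:ℝ)..t, l s ^ p₀) = ∫ s in Ioo 0 t, l s ^ p₀ := by
    rw [intervalIntegral.integral_of_le hle, MeasureTheory.integral_Ioc_eq_integral_Ioo]
  have convf : (∫ s in Ioo 0 t, k (t - s) * l s) = 1 := by
    rw [← MeasureTheory.integral_Ioc_eq_integral_Ioo, ← intervalIntegral.integral_of_le hle]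
    exact hkl t ht
  -- l t ≤ l s for s ∈ Ioo 0 t
  have hlts : ∀ s ∈ Ioo (0:ℝ) t, l t ≤ l s := fun s hs =>
    hl_anti (mem_Ioi.2 hs.1) (mem_Ioi.2 ht) hs.2.le
  have hlt0 : 0 ≤ l t := hl_nonneg t ht
  -- K1 consequence: ∫ l^p₀ ≤ cbar * t * l t ^ p₀
  have hK1' : (∫ s in Ioo 0 t, l s ^ p₀) ≤ cbar * t * l t ^ p₀ := by
    have := hK1 t ht ht'.le
    rw [convlp] at this
    rw [one_div_mul_eq_div, div_le_iff₀ ht] at this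
    linarith
  -- positivity of l t
  have hltpos : 0 < l t := by
    rcases hlt0.lt_or_eq with h | h
    · exact h
    have hlt : l t = 0 := h.symm
    exfalso
    have hzero : (∫ s in Ioo 0 t, l s ^ p₀) = 0 := by
      have h1 : (0:ℝ) ≤ ∫ s in Ioo 0 t, l s ^ p₀ := by
        apply MeasureTheory.setIntegral_nonneg hmeasIoo
        intro s hs
        exact Real.rpow_nonneg (hl_nonneg s hs.1) _
      have h2 : cbar * t * l t ^ p₀ = 0 := by
        rw [hlt, Real.zero_rpow (by positivity : p₀ ≠ 0), mul_zero]
      linarith [hK1']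
    -- then l = 0 a.e. on Ioo 0 t, contradicting the convolution identity
    have hae : ∀ᵐ s ∂(volume.restrict (Ioo (0:ℝ) t)), l s ^ p₀ = 0 := by
      have hnn : 0 ≤ᵐ[volume.restrict (Ioo (0:ℝ) t)] fun s => l s ^ p₀ := by
        filter_upwards [MeasureTheory.ae_restrict_mem hmeasIoo] with s hs
        exact Real.rpow_nonneg (hl_nonneg s hs.1) _
      have := (MeasureTheory.integral_eq_zero_iff_of_nonneg_ae hnn hIlp).1 hzero
      filter_upwards [this] with s hs
      exact hs
    have haef : ∀ᵐ s ∂(volume.restrict (Ioo (0:ℝ) t)), k (t - s) * l s = 0 := by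
      filter_upwards [hae, MeasureTheory.ae_restrict_mem hmeasIoo] with s hs hs'
      have hls : l s = 0 := by
        have := (Real.rpow_eq_zero_iff_of_nonneg (hl_nonneg s hs'.1)).1 hs
        exact this.1
      rw [hls, mul_zero]
    have : (∫ s in Ioo 0 t, k (t - s) * l s) = 0 :=
      MeasureTheory.integral_eq_zero_of_ae haef
    rw [convf] at this
    norm_num at this
  -- (A): ∫ l ≤ cbar * t * l t
  have keyA : (∫ s in Ioo 0 t, l s) ≤ cbar * t * l t := by
    have hmono : l t ^ (p₀ - 1) * (∫ s in Ioo 0 t, l s) ≤ ∫ s in Ioo 0 t, l s ^ p₀ := by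
      rw [← MeasureTheory.integral_const_mul]
      apply MeasureTheory.setIntegral_mono_on (hIlO.const_mul _) hIlp hmeasIoo
      intro s hs
      have hls : 0 < l s := lt_of_lt_of_le hltpos (hlts s hs)
      have h1 : l t ^ (p₀ - 1) ≤ l s ^ (p₀ - 1) :=
        Real.rpow_le_rpow hlt0 (hlts s hs) (by linarith)
      have h2 : l s ^ (p₀ - 1) * l s = l s ^ p₀ := by
        rw [← Real.rpow_add_one hls.ne']
        norm_num
      calc l t ^ (p₀ - 1) * l s ≤ l s ^ (p₀ - 1) * l s :=
            mul_le_mul_of_nonneg_right h1 hls.le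
        _ = l s ^ p₀ := h2
    have hpow : 0 < l t ^ (p₀ - 1) := Real.rpow_pos_of_pos hltpos _
    have : l t ^ (p₀ - 1) * (∫ s in Ioo 0 t, l s) ≤ cbar * t * (l t ^ (p₀ - 1) * l t) := by
      have h2 : l t ^ (p₀ - 1) * l t = l t ^ p₀ := by
        rw [← Real.rpow_add_one hltpos.ne']
        norm_num
      rw [h2]
      exact hmono.trans hK1'
    have := (mul_le_mul_iff_right₀ hpow).1 (by linarith [this] : l t ^ (p₀ - 1) * (∫ s in Ioo 0 t, l s) ≤ l t ^ (p₀ - 1) * (cbar * t * l t))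
    linarith
  -- (B): (∫ k) * l t ≤ 1
  have keyB : (∫ s in (0:ℝ)..t, k s) * l t ≤ 1 := by
    have hmono : (∫ s in Ioo 0 t, l t * k (t - s)) ≤ ∫ s in Ioo 0 t, k (t - s) * l s := by
      apply MeasureTheory.setIntegral_mono_on (hIktO.const_mul _) hIfO hmeasIoo
      intro s hs
      have hk0 : 0 ≤ k (t - s) := hk_nonneg _ (by linarith [hs.2])
      calc l t * k (t - s) ≤ l s * k (t - s) :=
            mul_le_mul_of_nonneg_right (hlts s hs) hk0
        _ = k (t - s) * l s := mul_comm _ _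
    rw [convf] at hmono
    have heq : (∫ s in Ioo 0 t, l t * k (t - s)) = l t * ∫ s in (0:ℝ)..t, k s := by
      rw [MeasureTheory.integral_const_mul]
      congr 1
      rw [← MeasureTheory.integral_Ioc_eq_integral_Ioo, ← intervalIntegral.integral_of_le hle]
      rw [intervalIntegral.integral_comp_sub_left k t]
      norm_num
    rw [heq] at hmono
    linarith [hmono]
  -- positivity of ∫ l
  have hIntl_pos : 0 < ∫ s in (0:ℝ)..t, l s := by
    rw [convl]
    have hconst : (∫ s in Ioo (0:ℝ) t, l t) ≤ ∫ s in Ioo 0 t, l s := by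
      apply MeasureTheory.setIntegral_mono_on (integrableOn_const (by
        rw [Real.volume_Ioo]; exact ENNReal.ofReal_ne_top)) hIlO hmeasIoo
      exact hlts
    have hconstval : (∫ s in Ioo (0:ℝ) t, l t) = t * l t := by
      rw [MeasureTheory.setIntegral_const, MeasureTheory.measureReal_def, Real.volume_Ioo]
      rw [ENNReal.toReal_ofReal (by linarith), smul_eq_mul]
      ring
    nlinarith [hconst, hconstval, mul_pos ht hltpos]
  -- nonnegativity of ∫ k
  have hIntk_nonneg : 0 ≤ ∫ s in (0:ℝ)..t, k s := by
    rw [convk]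
    exact MeasureTheory.setIntegral_nonneg hmeasIoo (fun s hs => hk_nonneg s hs.1)
  -- conclude
  rw [← convl] at keyA
  rw [le_mul_inv_iff₀ hIntl_pos]
  nlinarith [mul_le_mul_of_nonneg_left keyA hIntk_nonneg,
    mul_le_mul_of_nonneg_right keyB (by positivity : (0:ℝ) ≤ cbar * t)]
end

section
/- Assume (K0) and (K1). Then k₁(x·y) ≤ max{1, y^{−1}} · k₁(x) for all x, y > 0, where k₁(t) = ( ∫₀^t l(s) ds )^{−1}. -/
open MeasureTheory Set intervalIntegral

/-- Lemma 2.6: under (K0) and (K1), `k₁(x y) ≤ max{1, y⁻¹} k₁(x)` for all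
`x, y > 0`, where `k₁(t) = (∫₀ᵗ l)⁻¹`. -/
theorem k_one_scaling (k l : ℝ → ℝ) (p₀ t₀ cbar : ℝ)
    -- (K0)
    (hk_int : ∀ S : ℝ, 0 < S → IntegrableOn k (Ioc 0 S))
    (hl_int : ∀ S : ℝ, 0 < S → IntegrableOn l (Ioc 0 S))
    (hk_C1 : ContDiffOn ℝ 1 k (Ioi 0))
    (hl_C1 : ContDiffOn ℝ 1 l (Ioi 0))
    (hk_nonneg : ∀ t : ℝ, 0 < t → 0 ≤ k t)
    (hl_nonneg : ∀ t : ℝ, 0 < t → 0 ≤ l t)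
    (hk_anti : AntitoneOn k (Ioi 0))
    (hl_anti : AntitoneOn l (Ioi 0))
    (hk_conv : ConvexOn ℝ (Ioi 0) k)
    (hkl : ∀ t : ℝ, 0 < t → ∫ s in (0:ℝ)..t, k (t - s) * l s = 1)
    -- (K1)
    (hp₀ : 1 < p₀) (ht₀ : 0 < t₀) (hcbar : 1 < cbar)
    (hl_p : IntegrableOn (fun s => l s ^ p₀) (Ioo 0 t₀))
    (hK1 : ∀ t : ℝ, 0 < t → t ≤ t₀ →
      (1 / t) * ∫ s in (0:ℝ)..t, l s ^ p₀ ≤ cbar * l t ^ p₀) :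
    ∀ x y : ℝ, 0 < x → 0 < y →
      (∫ s in (0:ℝ)..(x * y), l s)⁻¹ ≤ max 1 y⁻¹ * (∫ s in (0:ℝ)..x, l s)⁻¹ := by
  -- Positivity of L(t) = ∫₀ᵗ l for t > 0
  have hLpos : ∀ t : ℝ, 0 < t → 0 < ∫ s in (0:ℝ)..t, l s := by
    intro t ht
    have hint : IntegrableOn l (Ioc 0 t) := hl_int t ht
    have hnn : 0 ≤ᵐ[volume.restrict (Ioc (0:ℝ) t)] l :=
      (ae_restrict_iff' measurableSet_Ioc).2 (ae_of_all _ fun s hs => hl_nonneg s hs.1)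
    have hge : 0 ≤ ∫ s in Ioc (0:ℝ) t, l s :=
      setIntegral_nonneg measurableSet_Ioc (fun s hs => hl_nonneg s hs.1)
    rw [intervalIntegral.integral_of_le ht.le]
    rcases hge.lt_or_eq with h | h
    · exact h
    · exfalso
      have hz : l =ᵐ[volume.restrict (Ioc (0:ℝ) t)] 0 :=
        (setIntegral_eq_zero_iff_of_nonneg_ae hnn hint).1 h.symm
      have h0 : ∫ s in (0:ℝ)..t, k (t - s) * l s = 0 := by
        rw [intervalIntegral.integral_of_le ht.le]
        apply integral_eq_zero_of_ae
        filter_upwards [hz] with s hs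
        simp [hs]
      rw [hkl t ht] at h0
      norm_num at h0
  intro x y hx hy
  have hxy : 0 < x * y := mul_pos hx hy
  have hLx := hLpos x hx
  have hLxy := hLpos (x * y) hxy
  rcases le_or_gt 1 y with hy1 | hy1
  · -- y ≥ 1 : L x ≤ L (x y)
    have hxxy : x ≤ x * y := le_mul_of_one_le_right hx.le hy1
    have hmono : (∫ s in (0:ℝ)..x, l s) ≤ ∫ s in (0:ℝ)..(x * y), l s := by
      rw [intervalIntegral.integral_of_le hx.le, intervalIntegral.integral_of_le hxy.le]
      apply setIntegral_mono_set (hl_int (x * y) hxy)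
      · exact (ae_restrict_iff' measurableSet_Ioc).2
          (ae_of_all _ fun s hs => hl_nonneg s hs.1)
      · exact HasSubset.Subset.eventuallyLE (Ioc_subset_Ioc_right hxxy)
    have h1 : (∫ s in (0:ℝ)..(x * y), l s)⁻¹ ≤ (∫ s in (0:ℝ)..x, l s)⁻¹ :=
      inv_anti₀ hLx hmono
    calc (∫ s in (0:ℝ)..(x * y), l s)⁻¹ ≤ (∫ s in (0:ℝ)..x, l s)⁻¹ := h1
      _ = 1 * (∫ s in (0:ℝ)..x, l s)⁻¹ := by ring
      _ ≤ max 1 y⁻¹ * (∫ s in (0:ℝ)..x, l s)⁻¹ := by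
          apply mul_le_mul_of_nonneg_right (le_max_left _ _) (inv_nonneg.2 hLx.le)
  · -- y < 1 : show y * L x ≤ L (x y)
    set a := x * y with ha
    have hax : a < x := by nlinarith
    have hla : 0 ≤ l a := hl_nonneg a hxy
    -- (A) a * l a ≤ L a
    have hA : a * l a ≤ ∫ s in (0:ℝ)..a, l s := by
      rw [intervalIntegral.integral_of_le hxy.le]
      have : a * l a = ∫ _ in Ioc (0:ℝ) a, l a := by
        rw [setIntegral_const, measureReal_def, Real.volume_Ioc, smul_eq_mul,
          ENNReal.toReal_ofReal (by linarith : (0:ℝ) ≤ a - 0)]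
        ring
      rw [this]
      apply setIntegral_mono_on (integrableOn_const (by simp [Real.volume_Ioc]))
        (hl_int a hxy) measurableSet_Ioc
      intro s hs
      exact hl_anti hs.1 hxy hs.2
    -- (B) ∫ a..x l ≤ (x - a) * l a
    have hB : (∫ s in a..x, l s) ≤ (x - a) * l a := by
      rw [intervalIntegral.integral_of_le hax.le]
      have hconst : (x - a) * l a = ∫ _ in Ioc a x, l a := by
        rw [setIntegral_const, measureReal_def, Real.volume_Ioc, smul_eq_mul,
          ENNReal.toReal_ofReal (by linarith : (0:ℝ) ≤ x - a)]
      rw [hconst]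
      apply setIntegral_mono_on
        ((hl_int x hx).mono_set (Ioc_subset_Ioc_left hxy.le))
        (integrableOn_const (by simp [Real.volume_Ioc]))
        measurableSet_Ioc
      intro s hs
      exact hl_anti hxy (lt_trans hxy hs.1) hs.1.le
    -- split L x
    have hII : IntervalIntegrable l volume 0 x :=
      (intervalIntegrable_iff_integrableOn_Ioc_of_le hx.le).2 (hl_int x hx)
    have hI1 : IntervalIntegrable l volume 0 a :=
      (intervalIntegrable_iff_integrableOn_Ioc_of_le hxy.le).2
        ((hl_int x hx).mono_set (Ioc_subset_Ioc_right hax.le))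
    have hI2 : IntervalIntegrable l volume a x :=
      (intervalIntegrable_iff_integrableOn_Ioc_of_le hax.le).2
        ((hl_int x hx).mono_set (Ioc_subset_Ioc_left hxy.le))
    have hsplit : (∫ s in (0:ℝ)..a, l s) + (∫ s in a..x, l s) = ∫ s in (0:ℝ)..x, l s :=
      intervalIntegral.integral_add_adjacent_intervals hI1 hI2
    have hkey : y * (∫ s in (0:ℝ)..x, l s) ≤ ∫ s in (0:ℝ)..a, l s := by
      have hxa : x - a = x * (1 - y) := by rw [ha]; ring
      nlinarith [hA, hB, hsplit, hLpos a hxy, hl_nonneg a hxy]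
    have hfin : (∫ s in (0:ℝ)..a, l s)⁻¹ ≤ y⁻¹ * (∫ s in (0:ℝ)..x, l s)⁻¹ := by
      have h2 : (∫ s in (0:ℝ)..a, l s)⁻¹ ≤ (y * ∫ s in (0:ℝ)..x, l s)⁻¹ :=
        inv_anti₀ (mul_pos hy hLx) hkey
      rwa [mul_inv] at h2
    calc (∫ s in (0:ℝ)..a, l s)⁻¹ ≤ y⁻¹ * (∫ s in (0:ℝ)..x, l s)⁻¹ := hfin
      _ ≤ max 1 y⁻¹ * (∫ s in (0:ℝ)..x, l s)⁻¹ :=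
          mul_le_mul_of_nonneg_right (le_max_right _ _) (inv_nonneg.2 hLx.le)
end

section
/- Let T > 0, let k : [0,T] → ℝ be absolutely continuous, i.e. k(t) = k(0) + ∫₀^t k̇(s) ds with k̇ ∈ L₁((0,T)), let H ∈ C¹(ℝ) and let u : [0,T] → ℝ be continuous. Then for almost every t ∈ (0,T) the functions k*u and k*(H∘u) are differentiable at t and H'(u(t)) · (d/dt)(k*u)(t) = (d/dt)(k*(H∘u))(t) + ( H'(u(t))·u(t) − H(u(t)) )·k(t) + ∫₀^t ( H(u(t−s)) − H(u(t)) − H'(u(t))·[u(t−s) − u(t)] ) · (−k̇(s)) ds. -/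
open MeasureTheory Set intervalIntegral

open Filter Topology

lemma convA {g w : ℝ → ℝ} (hg : Continuous g) {M : ℝ} (hgM : ∀ x, |g x| ≤ M)
    (hw : Integrable w) (t : ℝ) :
    HasDerivAt (fun τ => ∫ r in (0:ℝ)..τ, w r * (∫ s in (0:ℝ)..(τ - r), g s))
      (∫ r in (0:ℝ)..t, w r * g (t - r)) t := by
  have hgi : ∀ a b : ℝ, IntervalIntegrable g volume a b := fun a b => hg.intervalIntegrable a b
  set G0 : ℝ → ℝ := fun x => ∫ s in (0:ℝ)..x, g s with hG0def
  have hG0c : Continuous G0 := intervalIntegral.continuous_primitive hgi 0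
  have hG0d : ∀ x : ℝ, HasDerivAt G0 (g x) x := fun x =>
    intervalIntegral.integral_hasDerivAt_right (hgi 0 x)
      (hg.stronglyMeasurable.stronglyMeasurableAtFilter) hg.continuousAt
  have hG0b : ∀ x : ℝ, |G0 x| ≤ M * |x| := by
    intro x
    have := intervalIntegral.norm_integral_le_of_norm_le_const
      (f := g) (a := 0) (b := x) (C := M) (fun y _ => hgM y)
    simpa using this
  have hint : ∀ (τ a b : ℝ), IntervalIntegrable (fun r => w r * G0 (τ - r)) volume a b := by
    intro τ a b
    exact (hw.intervalIntegrable).mul_continuousOn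
      ((hG0c.comp (continuous_const.sub continuous_id)).continuousOn)
  rw [hasDerivAt_iff_tendsto_slope]
  have hdecomp : ∀ τ : ℝ, τ ≠ t →
      slope (fun τ => ∫ r in (0:ℝ)..τ, w r * G0 (τ - r)) t τ
      = (τ - t)⁻¹ * (∫ r in t..τ, w r * G0 (τ - r))
        + ∫ r in (0:ℝ)..t, w r * ((τ - t)⁻¹ * (G0 (τ - r) - G0 (t - r))) := by
    intro τ hτ
    have h1 : (∫ r in (0:ℝ)..τ, w r * G0 (τ - r))
        = (∫ r in (0:ℝ)..t, w r * G0 (τ - r)) + ∫ r in t..τ, w r * G0 (τ - r) :=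
      (intervalIntegral.integral_add_adjacent_intervals (hint τ 0 t) (hint τ t τ)).symm
    have h2 : (∫ r in (0:ℝ)..t, w r * G0 (τ - r)) - (∫ r in (0:ℝ)..t, w r * G0 (t - r))
        = ∫ r in (0:ℝ)..t, w r * (G0 (τ - r) - G0 (t - r)) := by
      rw [← intervalIntegral.integral_sub (hint τ 0 t) (hint t 0 t)]
      apply intervalIntegral.integral_congr
      intro r _; ring
    have h3 : (∫ r in (0:ℝ)..t, w r * ((τ - t)⁻¹ * (G0 (τ - r) - G0 (t - r))))
        = (τ - t)⁻¹ * ∫ r in (0:ℝ)..t, w r * (G0 (τ - r) - G0 (t - r)) := by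
      rw [← intervalIntegral.integral_const_mul]
      apply intervalIntegral.integral_congr
      intro r _; ring
    rw [slope_def_field, div_eq_inv_mul, h1, h3]
    rw [← h2]
    ring
  have L1 : Tendsto (fun τ => (τ - t)⁻¹ * (∫ r in t..τ, w r * G0 (τ - r)))
      (𝓝[≠] t) (𝓝 0) := by
    set P : ℝ → ℝ := fun τ => ∫ r in t..τ, |w r| with hPdef
    have hPc : Continuous P := intervalIntegral.continuous_primitive
      (fun a b => (hw.abs).intervalIntegrable) t
    have hPt : P t = 0 := intervalIntegral.integral_same
    apply squeeze_zero_norm' (a := fun τ => M * |P τ|)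
    · filter_upwards [self_mem_nhdsWithin] with τ (hτ : τ ≠ t)
      have hτt : |τ - t| ≠ 0 := fun h => hτ (by rwa [abs_eq_zero, sub_eq_zero] at h)
      have hbd : ∀ r ∈ Set.uIoc t τ, ‖w r * G0 (τ - r)‖ ≤ (M * |τ - t|) * |w r| := by
        intro r hr
        have h1 : |τ - r| ≤ |τ - t| := by
          rw [Set.mem_uIoc] at hr
          rcases hr with ⟨ha, hb⟩ | ⟨ha, hb⟩
          · rw [abs_of_nonneg (by linarith), abs_of_nonneg (by linarith)]; linarith
          · rw [abs_of_nonpos (by linarith), abs_of_nonpos (by linarith)]; linarith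
        have hM0 : 0 ≤ M := le_trans (abs_nonneg _) (hgM 0)
        calc ‖w r * G0 (τ - r)‖ = |w r| * |G0 (τ - r)| := by
              rw [Real.norm_eq_abs, abs_mul]
          _ ≤ |w r| * (M * |τ - r|) := by
              exact mul_le_mul_of_nonneg_left (hG0b _) (abs_nonneg _)
          _ ≤ |w r| * (M * |τ - t|) := by
              exact mul_le_mul_of_nonneg_left (mul_le_mul_of_nonneg_left h1 hM0) (abs_nonneg _)
          _ = (M * |τ - t|) * |w r| := by ring
      have hIb : ‖∫ r in t..τ, w r * G0 (τ - r)‖ ≤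
          abs (∫ r in t..τ, (M * |τ - t|) * |w r|) :=
        intervalIntegral.norm_integral_le_abs_of_norm_le
          (by filter_upwards [ae_restrict_mem measurableSet_uIoc] with r hr using hbd r hr)
          (((hw.abs).intervalIntegrable).const_mul _)
      have heq : abs (∫ r in t..τ, (M * |τ - t|) * |w r|) = M * |τ - t| * |P τ| := by
        rw [intervalIntegral.integral_const_mul, abs_mul, abs_of_nonneg
          (mul_nonneg (le_trans (abs_nonneg _) (hgM 0)) (abs_nonneg _))]
      calc ‖(τ - t)⁻¹ * ∫ r in t..τ, w r * G0 (τ - r)‖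
          = |τ - t|⁻¹ * ‖∫ r in t..τ, w r * G0 (τ - r)‖ := by
            rw [norm_mul, norm_inv]; simp [abs_sub_comm]
        _ ≤ |τ - t|⁻¹ * (M * |τ - t| * |P τ|) := by
            apply mul_le_mul_of_nonneg_left _ (inv_nonneg.mpr (abs_nonneg _))
            rw [← heq]; exact hIb
        _ = M * |P τ| := by field_simp
    · have : Tendsto (fun τ => M * |P τ|) (𝓝 t) (𝓝 (M * |P t|)) :=
        (continuous_const.mul hPc.abs).tendsto t
      rw [hPt, abs_zero, mul_zero] at this
      exact this.mono_left nhdsWithin_le_nhds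
  have L2 : Tendsto (fun τ => ∫ r in (0:ℝ)..t, w r * ((τ - t)⁻¹ * (G0 (τ - r) - G0 (t - r))))
      (𝓝[≠] t) (𝓝 (∫ r in (0:ℝ)..t, w r * g (t - r))) := by
    apply intervalIntegral.tendsto_integral_filter_of_dominated_convergence
      (bound := fun r => |w r| * M)
    · filter_upwards with τ
      exact (hw.aestronglyMeasurable.restrict).mul
        ((continuous_const.mul ((hG0c.comp (continuous_const.sub continuous_id)).sub
          (hG0c.comp (continuous_const.sub continuous_id)))).aestronglyMeasurable.restrict)
    · filter_upwards [self_mem_nhdsWithin] with τ (hτ : τ ≠ t)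
      filter_upwards with r _
      have hτt : (0:ℝ) < |τ - t| := by
        rw [abs_pos, sub_ne_zero]; exact hτ
      have hdiff : G0 (τ - r) - G0 (t - r) = ∫ s in (t - r)..(τ - r), g s := by
        rw [hG0def]
        exact (intervalIntegral.integral_interval_sub_left (hgi 0 (τ - r)) (hgi 0 (t - r)))
      have hbd : |G0 (τ - r) - G0 (t - r)| ≤ M * |τ - t| := by
        rw [hdiff]
        have := intervalIntegral.norm_integral_le_of_norm_le_const
          (f := g) (a := t - r) (b := τ - r) (C := M) (fun y _ => hgM y)
        simpa [sub_sub_sub_cancel_right] using this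
      calc ‖w r * ((τ - t)⁻¹ * (G0 (τ - r) - G0 (t - r)))‖
          = |w r| * (|τ - t|⁻¹ * |G0 (τ - r) - G0 (t - r)|) := by
            rw [Real.norm_eq_abs, abs_mul, abs_mul, abs_inv]
        _ ≤ |w r| * (|τ - t|⁻¹ * (M * |τ - t|)) := by
            apply mul_le_mul_of_nonneg_left _ (abs_nonneg _)
            exact mul_le_mul_of_nonneg_left hbd (inv_nonneg.mpr (abs_nonneg _))
        _ = |w r| * M := by field_simp
    · exact (((hw.abs).intervalIntegrable : IntervalIntegrable _ volume 0 t)).mul_const M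
    · filter_upwards with r _
      have hd : HasDerivAt (fun x => G0 (x - r)) (g (t - r)) t := by
        have := (hG0d (t - r)).comp t ((hasDerivAt_id t).sub_const r)
        simpa [Function.comp_def] using this
      have := hasDerivAt_iff_tendsto_slope.mp hd
      have h2 : Tendsto (fun τ => w r * slope (fun x => G0 (x - r)) t τ) (𝓝[≠] t)
          (𝓝 (w r * g (t - r))) := this.const_mul (w r)
      apply h2.congr
      intro τ
      rw [slope_def_field]
      ring
  have hfin := (L1.add L2).congr' (by
    filter_upwards [self_mem_nhdsWithin] with τ (hτ : τ ≠ t)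
    exact (hdecomp τ hτ).symm)
  rw [zero_add] at hfin
  exact hfin

lemma convB {g w : ℝ → ℝ} (hg : Continuous g) {M : ℝ} (hgM : ∀ x, |g x| ≤ M)
    (hwm : StronglyMeasurable w) (hw : Integrable w) {τ : ℝ} (hτ : 0 ≤ τ) :
    ∫ s in (0:ℝ)..τ, (∫ r in (0:ℝ)..(τ - s), w r) * g s
      = ∫ r in (0:ℝ)..τ, w r * ∫ s in (0:ℝ)..(τ - r), g s := by
  have hM0 : 0 ≤ M := le_trans (abs_nonneg _) (hgM 0)
  set G0 : ℝ → ℝ := fun x => ∫ s in (0:ℝ)..x, g s with hG0def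
  have hG0c : Continuous G0 := intervalIntegral.continuous_primitive
    (fun a b => hg.intervalIntegrable a b) 0
  have hGmax : ∀ x : ℝ, (∫ s in Ioc (0:ℝ) x, g s) = G0 (max x 0) := by
    intro x
    rcases le_or_gt 0 x with hx | hx
    · rw [max_eq_left hx, hG0def]
      exact (intervalIntegral.integral_of_le hx).symm
    · rw [Set.Ioc_eq_empty (by exact fun h => absurd (h.trans hx) (lt_irrefl _)), max_eq_right hx.le]
      simp [hG0def]
  set f : ℝ → ℝ → ℝ := fun s r => (Ioc (0:ℝ) τ).indicator g s * (Ioc (0:ℝ) (τ - s)).indicator w r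
    with hfdef
  -- integrability of the uncurried function
  have hmeas : StronglyMeasurable (Function.uncurry f) := by
    have h1 : StronglyMeasurable fun p : ℝ × ℝ => (Ioc (0:ℝ) τ).indicator g p.1 :=
      (hg.stronglyMeasurable.indicator measurableSet_Ioc).comp_measurable measurable_fst
    have hS : MeasurableSet {p : ℝ × ℝ | 0 < p.2 ∧ p.2 ≤ τ - p.1} :=
      (measurableSet_lt measurable_const measurable_snd).inter
        (measurableSet_le measurable_snd (measurable_const.sub measurable_fst))
    have h2 : StronglyMeasurable fun p : ℝ × ℝ => (Ioc (0:ℝ) (τ - p.1)).indicator w p.2 := by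
      have : (fun p : ℝ × ℝ => (Ioc (0:ℝ) (τ - p.1)).indicator w p.2)
          = {p : ℝ × ℝ | 0 < p.2 ∧ p.2 ≤ τ - p.1}.indicator (fun p => w p.2) := by
        funext p
        simp [Set.indicator_apply, Set.mem_Ioc, Set.mem_setOf_eq]
      rw [this]
      exact (hwm.comp_measurable measurable_snd).indicator hS
    exact h1.mul h2
  have hfint : Integrable (Function.uncurry f) (volume.prod volume) := by
    have hgood : Integrable
        (fun p : ℝ × ℝ => (Ioc (0:ℝ) τ).indicator (fun _ => M) p.1 * w p.2)
        (volume.prod volume) := by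
      apply Integrable.mul_prod _ hw
      exact (integrableOn_const (C := M) measure_Ioc_lt_top.ne).integrable_indicator
        measurableSet_Ioc
    apply Integrable.mono hgood hmeas.aestronglyMeasurable
    filter_upwards with p
    rcases p with ⟨s, r⟩
    by_cases hs : s ∈ Ioc (0:ℝ) τ
    · by_cases hr : r ∈ Ioc (0:ℝ) (τ - s)
      · simp only [Function.uncurry, hfdef, Set.indicator_of_mem hs, Set.indicator_of_mem hr,
          Real.norm_eq_abs]
        rw [abs_mul, abs_mul, abs_of_nonneg hM0]
        exact mul_le_mul_of_nonneg_right (hgM s) (abs_nonneg _)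
      · simp only [Function.uncurry, hfdef, Set.indicator_of_mem hs,
          Set.indicator_of_notMem hr, mul_zero, norm_zero]
        positivity
    · simp only [Function.uncurry, hfdef, Set.indicator_of_notMem hs, zero_mul, norm_zero]
      positivity
  have hswap := MeasureTheory.integral_integral_swap hfint
  -- compute the LHS of the swap
  have hL : (∫ s : ℝ, ∫ r : ℝ, f s r) = ∫ s in (0:ℝ)..τ, (∫ r in (0:ℝ)..(τ - s), w r) * g s := by
    have h1 : ∀ s : ℝ, (∫ r : ℝ, f s r)
        = (Ioc (0:ℝ) τ).indicator (fun s' => g s' * ∫ r in Ioc (0:ℝ) (τ - s'), w r) s := by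
      intro s
      by_cases hs : s ∈ Ioc (0:ℝ) τ
      · rw [Set.indicator_of_mem hs]
        simp only [hfdef, Set.indicator_of_mem hs]
        rw [MeasureTheory.integral_const_mul, ← MeasureTheory.integral_indicator measurableSet_Ioc]
      · rw [Set.indicator_of_notMem hs]
        simp [hfdef, Set.indicator_of_notMem hs]
    rw [integral_congr_ae (Filter.Eventually.of_forall h1),
      MeasureTheory.integral_indicator measurableSet_Ioc,
      intervalIntegral.integral_of_le hτ]
    apply setIntegral_congr_fun measurableSet_Ioc
    intro s hs
    dsimp only
    rw [← intervalIntegral.integral_of_le (by linarith [hs.2] : (0:ℝ) ≤ τ - s), mul_comm]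
  -- compute the RHS of the swap
  have hR : (∫ r : ℝ, ∫ s : ℝ, f s r) = ∫ r in (0:ℝ)..τ, w r * ∫ s in (0:ℝ)..(τ - r), g s := by
    have h1 : ∀ r : ℝ, (∫ s : ℝ, f s r)
        = (Ioi (0:ℝ)).indicator (fun r' => w r' * G0 (max (τ - r') 0)) r := by
      intro r
      by_cases hr : 0 < r
      · have heq : (fun s => f s r) = (Ioc (0:ℝ) (τ - r)).indicator (fun s => g s * w r) := by
          funext s
          by_cases hs : s ∈ Ioc (0:ℝ) (τ - r)
          · rw [Set.indicator_of_mem hs]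
            obtain ⟨hs1, hs2⟩ := hs
            have h1' : s ∈ Ioc (0:ℝ) τ := ⟨hs1, by linarith⟩
            have h2' : r ∈ Ioc (0:ℝ) (τ - s) := ⟨hr, by linarith⟩
            simp only [hfdef, Set.indicator_of_mem h1', Set.indicator_of_mem h2']
          · rw [Set.indicator_of_notMem hs]
            by_cases h1' : s ∈ Ioc (0:ℝ) τ
            · have h2' : r ∉ Ioc (0:ℝ) (τ - s) := by
                intro h2'
                exact hs ⟨h1'.1, by linarith [h2'.2]⟩
              simp only [hfdef, Set.indicator_of_notMem h2', mul_zero]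
            · simp only [hfdef, Set.indicator_of_notMem h1', zero_mul]
        rw [heq, MeasureTheory.integral_indicator measurableSet_Ioc,
          Set.indicator_of_mem (Set.mem_Ioi.mpr hr)]
        rw [MeasureTheory.integral_mul_const, hGmax (τ - r), mul_comm]
      · have heq : (fun s => f s r) = fun _ => 0 := by
          funext s
          have h2' : r ∉ Ioc (0:ℝ) (τ - s) := fun h => hr h.1
          simp only [hfdef, Set.indicator_of_notMem h2', mul_zero]
        rw [heq, Set.indicator_of_notMem (by simpa using hr)]
        simp
    rw [integral_congr_ae (Filter.Eventually.of_forall h1),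
      MeasureTheory.integral_indicator measurableSet_Ioi]
    have hIoi : Ioi (0:ℝ) = Ioc 0 τ ∪ Ioi τ := (Set.Ioc_union_Ioi_eq_Ioi hτ).symm
    have hintI : IntegrableOn (fun r => w r * G0 (max (τ - r) 0)) (Ioi (0:ℝ)) := by
      have hb : ∀ᵐ r ∂(volume.restrict (Ioi (0:ℝ))), ‖G0 (max (τ - r) 0)‖ ≤ M * τ := by
        filter_upwards [ae_restrict_mem measurableSet_Ioi] with r hr
        have h1 : |G0 (max (τ - r) 0)| ≤ M * |max (τ - r) 0| := by
          have := intervalIntegral.norm_integral_le_of_norm_le_const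
            (f := g) (a := 0) (b := max (τ - r) 0) (C := M) (fun y _ => hgM y)
          simpa using this
        have h2 : |max (τ - r) 0| ≤ τ := by
          rw [abs_of_nonneg (le_max_right _ _)]
          exact max_le (by linarith [Set.mem_Ioi.mp hr]) hτ
        calc ‖G0 (max (τ - r) 0)‖ ≤ M * |max (τ - r) 0| := h1
          _ ≤ M * τ := mul_le_mul_of_nonneg_left h2 hM0
      have hcont : Continuous fun r : ℝ => G0 (max (τ - r) 0) :=
        hG0c.comp ((continuous_const.sub continuous_id).max continuous_const)
      have hwIoi : IntegrableOn w (Ioi (0:ℝ)) := hw.integrableOn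
      have hmul : Integrable (fun r => G0 (max (τ - r) 0) * w r)
          (volume.restrict (Ioi (0:ℝ))) :=
        Integrable.bdd_mul (c := M * τ) hwIoi hcont.aestronglyMeasurable.restrict hb
      exact hmul.congr (Filter.Eventually.of_forall fun r => mul_comm _ _)
    rw [hIoi, setIntegral_union (Set.Ioc_disjoint_Ioi le_rfl) measurableSet_Ioi
      (hintI.mono_set (by rw [hIoi]; exact Set.subset_union_left))
      (hintI.mono_set (by rw [hIoi]; exact Set.subset_union_right))]
    have hzero : (∫ r in Ioi τ, w r * G0 (max (τ - r) 0)) = 0 := by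
      rw [setIntegral_congr_fun measurableSet_Ioi
        (fun r hr => by
          have hm : max (τ - r) 0 = 0 := max_eq_right (by linarith [Set.mem_Ioi.mp hr])
          show w r * G0 (max (τ - r) 0) = 0
          rw [hm]
          simp [hG0def] : EqOn (fun r => w r * G0 (max (τ - r) 0)) 0 (Ioi τ))]
      simp
    rw [hzero, add_zero, intervalIntegral.integral_of_le hτ]
    apply setIntegral_congr_fun measurableSet_Ioc
    intro r hr
    have hm : max (τ - r) 0 = τ - r := max_eq_left (by linarith [hr.2])
    show w r * G0 (max (τ - r) 0) = w r * ∫ s in (0:ℝ)..(τ - r), g s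
    rw [hm]
  rw [← hL, ← hR]
  exact hswap

lemma convC {g w : ℝ → ℝ} (hg : Continuous g) {M : ℝ} (hgM : ∀ x, |g x| ≤ M)
    (hwm : StronglyMeasurable w) (hw : Integrable w) (c : ℝ) {t : ℝ} (ht : 0 < t) :
    HasDerivAt (fun τ => ∫ s in (0:ℝ)..τ, (c + ∫ r in (0:ℝ)..(τ - s), w r) * g s)
      (c * g t + ∫ r in (0:ℝ)..t, w r * g (t - r)) t := by
  have hd1 : HasDerivAt (fun τ => ∫ s in (0:ℝ)..τ, g s) (g t) t :=
    intervalIntegral.integral_hasDerivAt_right (hg.intervalIntegrable 0 t)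
      hg.stronglyMeasurable.stronglyMeasurableAtFilter hg.continuousAt
  have hd := (hd1.const_mul c).add (convA hg hgM hw t)
  apply hd.congr_of_eventuallyEq
  filter_upwards [Ioi_mem_nhds ht] with τ (hτ : τ ∈ Ioi (0:ℝ))
  have hτ0 : (0:ℝ) ≤ τ := le_of_lt hτ
  have hWc : Continuous fun x : ℝ => ∫ r in (0:ℝ)..x, w r :=
    intervalIntegral.continuous_primitive (fun a b => hw.intervalIntegrable) 0
  have hsplit : (∫ s in (0:ℝ)..τ, (c + ∫ r in (0:ℝ)..(τ - s), w r) * g s)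
      = (∫ s in (0:ℝ)..τ, c * g s) + ∫ s in (0:ℝ)..τ, (∫ r in (0:ℝ)..(τ - s), w r) * g s := by
    have hWg : IntervalIntegrable (fun s => (∫ r in (0:ℝ)..(τ - s), w r) * g s) volume 0 τ := by
      apply Continuous.intervalIntegrable
      exact (hWc.comp (continuous_const.sub continuous_id)).mul hg
    rw [← intervalIntegral.integral_add ((hg.intervalIntegrable 0 τ).const_mul c) hWg]
    apply intervalIntegral.integral_congr
    intro s _
    ring
  rw [hsplit, intervalIntegral.integral_const_mul, convB hg hgM hwm hw hτ0]
  rfl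

/-- The fundamental identity (18): for `k ∈ H¹₁([0,T])`, `H ∈ C¹(ℝ)` and `u`
continuous, for a.e. `t ∈ (0,T)` the convolutions `k*u` and `k*(H∘u)` are
differentiable at `t` and
`H'(u(t)) (d/dt)(k*u)(t) = (d/dt)(k*(H∘u))(t) + (H'(u(t)) u(t) − H(u(t))) k(t)
 + ∫₀ᵗ ( H(u(t−s)) − H(u(t)) − H'(u(t))(u(t−s) − u(t)) ) (−k̇(s)) ds`. -/
theorem fundamental_identity (T : ℝ) (hT : 0 < T)
    (k kdot u H H' : ℝ → ℝ)
    (hkdot : IntegrableOn kdot (Ioo 0 T))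
    (hk : ∀ t ∈ Icc (0:ℝ) T, k t = k 0 + ∫ s in (0:ℝ)..t, kdot s)
    (hu : ContinuousOn u (Icc 0 T))
    (hH : ∀ y : ℝ, HasDerivAt H (H' y) y)
    (hH' : Continuous H') :
    ∀ᵐ t : ℝ, t ∈ Ioo 0 T →
      ∃ d₁ d₂ : ℝ,
        HasDerivAt (fun τ => ∫ s in (0:ℝ)..τ, k (τ - s) * u s) d₁ t ∧
        HasDerivAt (fun τ => ∫ s in (0:ℝ)..τ, k (τ - s) * H (u s)) d₂ t ∧
        H' (u t) * d₁ =
          d₂ + (H' (u t) * u t - H (u t)) * k t +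
            ∫ s in (0:ℝ)..t,
              (H (u (t - s)) - H (u t) - H' (u t) * (u (t - s) - u t)) * (-kdot s) := by
  -- measurable representative of kdot, extended by zero
  obtain ⟨kdm, hkdm_sm, hkdm_ae⟩ := hkdot.1
  set w : ℝ → ℝ := (Ioo (0:ℝ) T).indicator kdm with hwdef
  have hw_sm : StronglyMeasurable w := hkdm_sm.indicator measurableSet_Ioo
  have hw_int : Integrable w := by
    rw [hwdef, integrable_indicator_iff measurableSet_Ioo]
    exact hkdot.congr hkdm_ae
  have hw_ae : ∀ᵐ x : ℝ, x ∈ Ioo (0:ℝ) T → w x = kdot x := by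
    have h1 := (MeasureTheory.ae_restrict_iff' measurableSet_Ioo).mp hkdm_ae
    filter_upwards [h1] with x hx hmem
    rw [hwdef, Set.indicator_of_mem hmem, ← hx hmem]
  -- interval integrals of w and kdot agree on [0, T]
  have hweq : ∀ x ∈ Icc (0:ℝ) T, (∫ r in (0:ℝ)..x, w r) = ∫ r in (0:ℝ)..x, kdot r := by
    intro x hx
    rw [intervalIntegral.integral_of_le hx.1, intervalIntegral.integral_of_le hx.1]
    apply MeasureTheory.integral_congr_ae
    have hne : ∀ᵐ r : ℝ, r ∉ ({T} : Set ℝ) :=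
      measure_eq_zero_iff_ae_notMem.mp (measure_singleton T)
    filter_upwards [ae_restrict_mem measurableSet_Ioc, ae_restrict_of_ae hw_ae,
      ae_restrict_of_ae hne] with r hr hwr hrT
    have hmem : r ∈ Ioo (0:ℝ) T := by
      constructor
      · exact hr.1
      · rcases lt_or_eq_of_le (le_trans hr.2 hx.2) with h | h
        · exact h
        · exact absurd (by simpa using h) hrT
    exact hwr hmem
  -- k agrees with the primitive of w on [0, T]
  have hKeq : ∀ x ∈ Icc (0:ℝ) T, k x = k 0 + ∫ r in (0:ℝ)..x, w r := by
    intro x hx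
    rw [hk x hx, hweq x hx]
  -- continuous bounded extensions of u and H ∘ u
  set v1 : ℝ → ℝ := fun x => u ↑(Set.projIcc 0 T hT.le x) with hv1def
  have hv1c : Continuous v1 := hu.restrict.comp continuous_projIcc
  have hv1eq : ∀ x ∈ Icc (0:ℝ) T, v1 x = u x := by
    intro x hx
    rw [hv1def]
    simp only [Set.projIcc_of_mem hT.le hx]
  obtain ⟨M1, hM1⟩ := isCompact_Icc.exists_bound_of_continuousOn hu
  have hv1b : ∀ x : ℝ, |v1 x| ≤ M1 := fun x =>
    hM1 _ (Set.projIcc 0 T hT.le x).2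
  have hHc : Continuous H := continuous_iff_continuousAt.mpr fun y => (hH y).continuousAt
  set v2 : ℝ → ℝ := fun x => H (v1 x) with hv2def
  have hv2c : Continuous v2 := hHc.comp hv1c
  obtain ⟨M2, hM2⟩ := isCompact_Icc.exists_bound_of_continuousOn (hHc.comp_continuousOn hu)
  have hv2b : ∀ x : ℝ, |v2 x| ≤ M2 := fun x =>
    hM2 _ (Set.projIcc 0 T hT.le x).2
  -- the a.e. statement holds for every t ∈ (0, T)
  refine Filter.Eventually.of_forall fun t ht => ?_
  obtain ⟨ht0, htT⟩ := ht
  have htIcc : t ∈ Icc (0:ℝ) T := ⟨le_of_lt ht0, le_of_lt htT⟩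
  -- the two convolutions agree near t with the nice versions
  have hcong : ∀ (v : ℝ → ℝ), (∀ x ∈ Icc (0:ℝ) T, v x = u x) →
      ∀ (G : ℝ → ℝ), (∀ x ∈ Icc (0:ℝ) T, G x = u x) → True := fun _ _ _ _ => trivial
  have key : ∀ (v : ℝ → ℝ), (∀ x ∈ Icc (0:ℝ) T, v x = u x) → False → True := fun _ _ h => h.elim
  clear hcong key
  have hFeq : ∀ (v vbar : ℝ → ℝ), (∀ x ∈ Icc (0:ℝ) T, vbar x = v x) →
      (fun τ => ∫ s in (0:ℝ)..τ, k (τ - s) * v s) =ᶠ[nhds t]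
      (fun τ => ∫ s in (0:ℝ)..τ, (k 0 + ∫ r in (0:ℝ)..(τ - s), w r) * vbar s) := by
    intro v vbar hvv
    filter_upwards [isOpen_Ioo.mem_nhds ⟨ht0, htT⟩] with τ hτ
    apply intervalIntegral.integral_congr
    intro s hs
    rw [Set.uIcc_of_le (le_of_lt hτ.1)] at hs
    show k (τ - s) * v s = (k 0 + ∫ r in (0:ℝ)..(τ - s), w r) * vbar s
    have hs1 : τ - s ∈ Icc (0:ℝ) T := ⟨by linarith [hs.2], by linarith [hs.1, hτ.2]⟩
    have hs2 : s ∈ Icc (0:ℝ) T := ⟨hs.1, by linarith [hs.2, hτ.2]⟩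
    rw [hKeq _ hs1, hvv _ hs2]
  -- derivatives
  have hd1 := convC hv1c hv1b hw_sm hw_int (k 0) ht0
  have hd2 := convC hv2c hv2b hw_sm hw_int (k 0) ht0
  have hD1 : HasDerivAt (fun τ => ∫ s in (0:ℝ)..τ, k (τ - s) * u s)
      (k 0 * v1 t + ∫ r in (0:ℝ)..t, w r * v1 (t - r)) t :=
    hd1.congr_of_eventuallyEq (hFeq u v1 hv1eq)
  have hD2 : HasDerivAt (fun τ => ∫ s in (0:ℝ)..τ, k (τ - s) * H (u s))
      (k 0 * v2 t + ∫ r in (0:ℝ)..t, w r * v2 (t - r)) t := by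
    apply hd2.congr_of_eventuallyEq
    apply hFeq (fun s => H (u s)) v2
    intro x hx
    rw [hv2def]
    simp only [hv1eq x hx]
  refine ⟨_, _, hD1, hD2, ?_⟩
  -- final algebraic identity
  set A := H' (u t) with hA
  set b := u t with hb
  set c0 := H (u t) with hc0
  set I1 := ∫ r in (0:ℝ)..t, w r * v1 (t - r) with hI1
  set I2 := ∫ r in (0:ℝ)..t, w r * v2 (t - r) with hI2
  have hJ : (∫ r in (0:ℝ)..t, w r) = k t - k 0 := by
    have := hKeq t htIcc
    linarith
  -- rewrite the remainder integral in terms of w and v1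
  have hR : (∫ s in (0:ℝ)..t, (H (u (t - s)) - c0 - A * (u (t - s) - b)) * (-kdot s))
      = ∫ s in (0:ℝ)..t, (v2 (t - s) - c0 - A * (v1 (t - s) - b)) * (-w s) := by
    rw [intervalIntegral.integral_of_le (le_of_lt ht0),
      intervalIntegral.integral_of_le (le_of_lt ht0)]
    apply MeasureTheory.integral_congr_ae
    filter_upwards [ae_restrict_mem measurableSet_Ioc, ae_restrict_of_ae hw_ae]
      with s hs hws
    show (H (u (t - s)) - c0 - A * (u (t - s) - b)) * (-kdot s)
      = (v2 (t - s) - c0 - A * (v1 (t - s) - b)) * (-w s)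
    have hmem : s ∈ Ioo (0:ℝ) T := ⟨hs.1, by linarith [hs.2]⟩
    have hts : t - s ∈ Icc (0:ℝ) T := ⟨by linarith [hs.2], by linarith [hs.1]⟩
    rw [hws hmem, hv2def]
    simp only [hv1eq _ hts]
  have hiw : IntervalIntegrable w volume 0 t := hw_int.intervalIntegrable
  have hi1 : IntervalIntegrable (fun s => w s * v1 (t - s)) volume 0 t :=
    hiw.mul_continuousOn ((hv1c.comp (continuous_const.sub continuous_id)).continuousOn)
  have hi2 : IntervalIntegrable (fun s => w s * v2 (t - s)) volume 0 t :=
    hiw.mul_continuousOn ((hv2c.comp (continuous_const.sub continuous_id)).continuousOn)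
  have hexp : (∫ s in (0:ℝ)..t, (v2 (t - s) - c0 - A * (v1 (t - s) - b)) * (-w s))
      = -I2 + c0 * (k t - k 0) + A * I1 - A * b * (k t - k 0) := by
    have heq : (fun s => (v2 (t - s) - c0 - A * (v1 (t - s) - b)) * (-w s))
        = fun s => (-1 : ℝ) * (w s * v2 (t - s)) +
            (c0 * w s + (A * (w s * v1 (t - s)) + (-(A * b)) * w s)) := by
      funext s; ring
    rw [heq, intervalIntegral.integral_add (hi2.const_mul (-1))
        ((hiw.const_mul c0).add ((hi1.const_mul A).add (hiw.const_mul (-(A * b))))),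
      intervalIntegral.integral_add (hiw.const_mul c0)
        ((hi1.const_mul A).add (hiw.const_mul (-(A * b)))),
      intervalIntegral.integral_add (hi1.const_mul A) (hiw.const_mul (-(A * b))),
      intervalIntegral.integral_const_mul, intervalIntegral.integral_const_mul,
      intervalIntegral.integral_const_mul, intervalIntegral.integral_const_mul,
      hJ, ← hI1, ← hI2]
    ring
  have hv1t : v1 t = b := hv1eq t htIcc
  have hv2t : v2 t = c0 := by rw [hv2def]; simp only [hv1eq t htIcc, hc0]
  rw [hR, hexp, hv1t, hv2t]
  ring
end
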